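/- arXiv:0811.1385 — 6 statements merged into one kernel-verified Lean document; each statement's English description precedes it below -/
import Mathlib

section
/- Let ḡ ∈ PGL₂(ℂ) be an element of infinite order. Then the centralizer of ḡ in PGL₂(ℂ) is abelian. -/
/-- `PGL₂(ℂ)`: the quotient of `GL₂(ℂ)` by its center (the scalar matrices). -/
abbrev PGL2C : Type := GL (Fin 2) ℂ ⧸ Subgroup.center (GL (Fin 2) ℂ)

lemma span2 (G X : Matrix (Fin 2) (Fin 2) ℂ) (hG : ¬ ∃ c : ℂ, G = c • 1)
    (h : X * G = G * X) : ∃ α β : ℂ, X = α • 1 + β • G := by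
  rw [← Matrix.ext_iff] at h
  simp only [Fin.forall_fin_two, Matrix.mul_apply, Fin.sum_univ_two] at h
  obtain ⟨⟨h00, h01⟩, h10, h11⟩ := h
  by_cases hq : G 0 1 ≠ 0
  · refine ⟨X 0 0 - X 0 1 * G 0 0 / G 0 1, X 0 1 / G 0 1, ?_⟩
    ext i j
    fin_cases i <;> fin_cases j <;> simp [Matrix.one_apply] <;> field_simp
    · ring
    · linear_combination -h00
    · linear_combination -h01
  by_cases hr : G 1 0 ≠ 0
  · refine ⟨X 0 0 - X 1 0 * G 0 0 / G 1 0, X 1 0 / G 1 0, ?_⟩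
    ext i j
    fin_cases i <;> fin_cases j <;> simp [Matrix.one_apply] <;> field_simp
    · ring
    · linear_combination h00
    · linear_combination h10
  push_neg at hq hr
  have hps : G 0 0 ≠ G 1 1 := by
    intro hd
    exact hG ⟨G 0 0, by ext i j; fin_cases i <;> fin_cases j <;>
      simp [Matrix.one_apply, hq, hr, hd]⟩
  have hd : G 1 1 - G 0 0 ≠ 0 := fun h => hps (by linear_combination -h)
  have hb : X 0 1 = 0 := by
    have h2 : X 0 1 * (G 1 1 - G 0 0) = 0 := by
      rw [hq] at h01; linear_combination h01
    rcases mul_eq_zero.mp h2 with h3 | h3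
    · exact h3
    · exact absurd h3 hd
  have hcc : X 1 0 = 0 := by
    have h2 : X 1 0 * (G 1 1 - G 0 0) = 0 := by
      rw [hr] at h10; linear_combination -h10
    rcases mul_eq_zero.mp h2 with h3 | h3
    · exact h3
    · exact absurd h3 hd
  refine ⟨X 0 0 - G 0 0 * (X 1 1 - X 0 0) / (G 1 1 - G 0 0),
    (X 1 1 - X 0 0) / (G 1 1 - G 0 0), ?_⟩
  ext i j
  fin_cases i <;> fin_cases j <;> simp [Matrix.one_apply, hb, hcc, hq, hr] <;> field_simp <;> ring


lemma glcenter (z : GL (Fin 2) ℂ) :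
    z ∈ Subgroup.center (GL (Fin 2) ℂ) ↔
      ∃ c : ℂ, (z : Matrix (Fin 2) (Fin 2) ℂ) = c • 1 := by
  constructor
  · intro hz
    set u : GL (Fin 2) ℂ := Matrix.GeneralLinearGroup.mkOfDetNeZero !![1,1;0,1]
      (by norm_num [Matrix.det_fin_two_of]) with hu
    set v : GL (Fin 2) ℂ := Matrix.GeneralLinearGroup.mkOfDetNeZero !![1,0;1,1]
      (by norm_num [Matrix.det_fin_two_of]) with hv
    have h1 : (u * z : GL (Fin 2) ℂ).val = (z * u : GL (Fin 2) ℂ).val := by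
      rw [Subgroup.mem_center_iff.mp hz u]
    have h2 : (v * z : GL (Fin 2) ℂ).val = (z * v : GL (Fin 2) ℂ).val := by
      rw [Subgroup.mem_center_iff.mp hz v]
    rw [Units.val_mul, Units.val_mul] at h1 h2
    have hu' : (u : Matrix (Fin 2) (Fin 2) ℂ) = !![1,1;0,1] := rfl
    have hv' : (v : Matrix (Fin 2) (Fin 2) ℂ) = !![1,0;1,1] := rfl
    rw [hu'] at h1
    rw [hv'] at h2
    rw [← Matrix.ext_iff] at h1 h2
    simp only [Fin.forall_fin_two, Matrix.mul_apply, Fin.sum_univ_two,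
      Matrix.cons_val', Matrix.cons_val_zero, Matrix.cons_val_one, Matrix.head_cons,
      Matrix.empty_val', Matrix.cons_val_fin_one, Matrix.head_fin_const, Matrix.of_apply,
      one_mul, mul_one, zero_mul, mul_zero, add_zero, zero_add] at h1 h2
    obtain ⟨⟨a1, a2⟩, a3, a4⟩ := h1
    obtain ⟨⟨b1, b2⟩, b3, b4⟩ := h2
    refine ⟨z.val 0 0, ?_⟩
    ext i j
    fin_cases i <;> fin_cases j <;> simp [Matrix.one_apply]
    · linear_combination -b1
    · linear_combination a1
    · linear_combination a2
  · rintro ⟨c, hc⟩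
    rw [Subgroup.mem_center_iff]
    intro B
    ext : 1
    rw [Units.val_mul, Units.val_mul, hc, Matrix.mul_smul, Matrix.smul_mul, mul_one, one_mul]

lemma cayley2 (M : Matrix (Fin 2) (Fin 2) ℂ) (h : Matrix.trace M = 0) :
    M * M = (-M.det) • 1 := by
  rw [Matrix.trace_fin_two] at h
  ext i j
  fin_cases i <;> fin_cases j <;>
    simp [Matrix.mul_apply, Fin.sum_univ_two, Matrix.det_fin_two, Matrix.one_apply]
  · linear_combination M 0 0 * h
  · linear_combination M 0 1 * h
  · linear_combination M 1 0 * h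
  · linear_combination M 1 1 * h

lemma key (G X : GL (Fin 2) ℂ)
    (hg : ¬ IsOfFinOrder (QuotientGroup.mk G : PGL2C))
    (hx : (QuotientGroup.mk X : PGL2C) ∈
      Subgroup.centralizer {(QuotientGroup.mk G : PGL2C)}) :
    (X : Matrix (Fin 2) (Fin 2) ℂ) * (G : Matrix (Fin 2) (Fin 2) ℂ) =
      (G : Matrix (Fin 2) (Fin 2) ℂ) * (X : Matrix (Fin 2) (Fin 2) ℂ) := by
  have h1 : (QuotientGroup.mk (G * X) : PGL2C) = QuotientGroup.mk (X * G) := by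
    rw [QuotientGroup.mk_mul, QuotientGroup.mk_mul]
    exact Subgroup.mem_centralizer_iff.mp hx _ (Set.mem_singleton _)
  have h2 : (G * X)⁻¹ * (X * G) ∈ Subgroup.center (GL (Fin 2) ℂ) :=
    QuotientGroup.eq.mp h1
  obtain ⟨c, hc⟩ := (glcenter _).mp h2
  have h4 : (G * X) * ((G * X)⁻¹ * (X * G)) = X * G := by group
  have h5 := congrArg Units.val h4
  rw [Units.val_mul, hc, Units.val_mul, Units.val_mul, Matrix.mul_smul, mul_one] at h5
  -- h5 : c • (G.val * X.val) = X.val * G.val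
  have hdu : ((G : Matrix (Fin 2) (Fin 2) ℂ) * X).det ≠ 0 := by
    have : IsUnit ((G : Matrix (Fin 2) (Fin 2) ℂ) * X) := ⟨G * X, (Units.val_mul G X).symm⟩
    exact ((Matrix.isUnit_iff_isUnit_det _).mp this).ne_zero
  have hc2 : (c - 1) * (c + 1) = 0 := by
    have h6 := congrArg Matrix.det h5
    rw [Matrix.det_smul, Matrix.det_mul, Matrix.det_mul, Fintype.card_fin] at h6
    have h8 : (c ^ 2 - 1) * ((G : Matrix (Fin 2) (Fin 2) ℂ).det * (X : Matrix (Fin 2) (Fin 2) ℂ).det) = 0 := by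
      linear_combination h6
    rw [Matrix.det_mul] at hdu
    rcases mul_eq_zero.mp h8 with h9 | h9
    · linear_combination h9
    · exact absurd h9 hdu
  rcases mul_eq_zero.mp hc2 with h7 | h7
  · have hc1 : c = 1 := by linear_combination h7
    rw [hc1, one_smul] at h5
    exact h5.symm
  · have hc1 : c = -1 := by linear_combination h7
    rw [hc1] at h5
    exfalso
    -- trace G = 0
    have hXinv : (X : Matrix (Fin 2) (Fin 2) ℂ) * ((X⁻¹ : GL (Fin 2) ℂ) : Matrix (Fin 2) (Fin 2) ℂ) = 1 := by
      rw [← Units.val_mul, mul_inv_cancel, Units.val_one]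
    have hXinv' : ((X⁻¹ : GL (Fin 2) ℂ) : Matrix (Fin 2) (Fin 2) ℂ) * (X : Matrix (Fin 2) (Fin 2) ℂ) = 1 := by
      rw [← Units.val_mul, inv_mul_cancel, Units.val_one]
    have e1 : (G : Matrix (Fin 2) (Fin 2) ℂ) =
        -(((X⁻¹ : GL (Fin 2) ℂ) : Matrix (Fin 2) (Fin 2) ℂ) * ((G : Matrix (Fin 2) (Fin 2) ℂ) * X)) := by
      calc (G : Matrix (Fin 2) (Fin 2) ℂ)
          = ((X⁻¹ : GL (Fin 2) ℂ) : Matrix (Fin 2) (Fin 2) ℂ) * ((X : Matrix (Fin 2) (Fin 2) ℂ) * G) := by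
            rw [← mul_assoc, hXinv', one_mul]
        _ = -(((X⁻¹ : GL (Fin 2) ℂ) : Matrix (Fin 2) (Fin 2) ℂ) * ((G : Matrix (Fin 2) (Fin 2) ℂ) * X)) := by
            rw [← h5]; simp
    have htr : Matrix.trace (G : Matrix (Fin 2) (Fin 2) ℂ) = 0 := by
      have := congrArg Matrix.trace e1
      rw [Matrix.trace_neg, Matrix.trace_mul_comm, mul_assoc, hXinv, mul_one] at this
      linear_combination this / 2
    have hsq : ((G : Matrix (Fin 2) (Fin 2) ℂ)) * G = (-(G : Matrix (Fin 2) (Fin 2) ℂ).det) • 1 :=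
      cayley2 _ htr
    have hcen : G * G ∈ Subgroup.center (GL (Fin 2) ℂ) :=
      (glcenter _).mpr ⟨-(G : Matrix (Fin 2) (Fin 2) ℂ).det, by rw [Units.val_mul]; exact hsq⟩
    have : (QuotientGroup.mk G : PGL2C) ^ 2 = 1 := by
      rw [sq, ← QuotientGroup.mk_mul]
      exact (QuotientGroup.eq_one_iff _).mpr hcen
    exact hg (isOfFinOrder_iff_pow_eq_one.mpr ⟨2, two_pos, this⟩)

/-- The centralizer in `PGL₂(ℂ)` of an element of infinite order
is abelian. -/
theorem centralizer_abelian_PGL2C_of_infiniteOrder (g : PGL2C)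
    (hg : ¬ IsOfFinOrder g) :
    ∀ x ∈ Subgroup.centralizer ({g} : Set PGL2C),
      ∀ y ∈ Subgroup.centralizer ({g} : Set PGL2C), x * y = y * x := by
  obtain ⟨G, rfl⟩ := QuotientGroup.mk_surjective g
  intro x hx y hy
  obtain ⟨X, rfl⟩ := QuotientGroup.mk_surjective x
  obtain ⟨Y, rfl⟩ := QuotientGroup.mk_surjective y
  have hXG := key G X hg hx
  have hYG := key G Y hg hy
  have hGns : ¬ ∃ c : ℂ, (G : Matrix (Fin 2) (Fin 2) ℂ) = c • 1 := by
    rintro ⟨c, hc⟩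
    apply hg
    have h1 : (QuotientGroup.mk G : PGL2C) = 1 :=
      (QuotientGroup.eq_one_iff _).mpr ((glcenter G).mpr ⟨c, hc⟩)
    rw [h1]
    exact IsOfFinOrder.one
  obtain ⟨a, b, hX⟩ := span2 _ _ hGns hXG
  obtain ⟨a', b', hY⟩ := span2 _ _ hGns hYG
  rw [← QuotientGroup.mk_mul, ← QuotientGroup.mk_mul]
  congr 1
  ext : 1
  rw [Units.val_mul, Units.val_mul, hX, hY]
  simp only [add_mul, mul_add, smul_mul_assoc, mul_smul_comm, one_mul, mul_one, smul_smul]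
  module
end

section
/- PGL₂(ℂ) does not contain a subgroup isomorphic to the generalized dihedral group; that is, there is no injective group homomorphism from the presented group ⟨x, y ∣ x² = y²⟩ into PGL₂(ℂ). -/
/-- The generalized dihedral group `⟨x, y ∣ x² = y²⟩`, presented with the single
relator `x²y⁻²`. -/
abbrev GenDihedral : Type :=
  PresentedGroup
    ({FreeGroup.of true ^ 2 * (FreeGroup.of false ^ 2)⁻¹} : Set (FreeGroup Bool))

lemma genDihedral_rel :
    (PresentedGroup.of true : GenDihedral) ^ 2 = PresentedGroup.of false ^ 2 := by
  have h1 : (PresentedGroup.mk _ (FreeGroup.of true ^ 2 * (FreeGroup.of false ^ 2)⁻¹)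
      : GenDihedral) = 1 := by
    apply (QuotientGroup.eq_one_iff _).2
    exact Subgroup.subset_normalClosure (Set.mem_singleton _)
  have h2 : (PresentedGroup.of true : GenDihedral) ^ 2 *
      ((PresentedGroup.of false : GenDihedral) ^ 2)⁻¹ = 1 := by
    simpa [PresentedGroup.of, map_mul, map_pow, map_inv] using h1
  exact mul_inv_eq_one.mp h2

lemma genDihedral_sq_ne_one : (PresentedGroup.of true : GenDihedral) ^ 2 ≠ 1 := by
  have hrel : ∀ r ∈ ({FreeGroup.of true ^ 2 * (FreeGroup.of false ^ 2)⁻¹} :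
      Set (FreeGroup Bool)),
      FreeGroup.lift (fun _ : Bool => Multiplicative.ofAdd (1 : ℤ)) r = 1 := by
    intro r hr
    rw [Set.mem_singleton_iff] at hr
    subst hr
    simp
  intro h
  have := congrArg (PresentedGroup.toGroup hrel) h
  simp only [map_pow, map_one, PresentedGroup.toGroup.of] at this
  have : (2 : ℤ) = 0 := by
    simpa [← ofAdd_nsmul] using this
  omega

lemma genDihedral_not_comm :
    (PresentedGroup.of true : GenDihedral) * PresentedGroup.of false ≠
      PresentedGroup.of false * PresentedGroup.of true := by
  classical
  have hrel : ∀ r ∈ ({FreeGroup.of true ^ 2 * (FreeGroup.of false ^ 2)⁻¹} :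
      Set (FreeGroup Bool)),
      FreeGroup.lift (fun t : Bool => if t then Equiv.swap (0 : Fin 3) 1
        else Equiv.swap (1 : Fin 3) 2) r = 1 := by
    intro r hr
    rw [Set.mem_singleton_iff] at hr
    subst hr
    simp only [map_mul, map_pow, map_inv, FreeGroup.lift_apply_of, if_true, if_false]
    decide
  intro h
  have := congrArg (PresentedGroup.toGroup hrel) h
  simp only [map_mul, PresentedGroup.toGroup.of] at this
  revert this
  decide

/-- The centralizer of a non-scalar 2×2 matrix is contained in its span with `1`. -/
lemma comm_struct (C A : Matrix (Fin 2) (Fin 2) ℂ)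
    (h : A * C = C * A) (hC : ∀ p : ℂ, C ≠ p • (1 : Matrix (Fin 2) (Fin 2) ℂ)) :
    ∃ p q : ℂ, A = p • 1 + q • C := by
  have key : ∀ i j, A i 0 * C 0 j + A i 1 * C 1 j = C i 0 * A 0 j + C i 1 * A 1 j := by
    intro i j
    have := congrFun (congrFun h i) j
    simpa [Matrix.mul_apply, Fin.sum_univ_two] using this
  by_cases h01 : C 0 1 ≠ 0
  · refine ⟨A 0 0 - (A 0 1 / C 0 1) * C 0 0, A 0 1 / C 0 1, ?_⟩
    ext i j
    fin_cases i <;> fin_cases j <;>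
      simp only [Matrix.add_apply, Matrix.smul_apply, Matrix.one_apply, smul_eq_mul,
        Fin.zero_eta, Fin.mk_one] <;> norm_num <;> field_simp
    · linear_combination - key 0 0
    · linear_combination - key 0 1
  · push_neg at h01
    by_cases h10 : C 1 0 ≠ 0
    · have hA01 : A 0 1 = 0 := by
        have h2 : A 0 1 * C 1 0 = 0 := by
          linear_combination key 0 0 + A 1 0 * h01
        exact (mul_eq_zero.mp h2).resolve_right h10
      refine ⟨A 0 0 - (A 1 0 / C 1 0) * C 0 0, A 1 0 / C 1 0, ?_⟩
      ext i j
      fin_cases i <;> fin_cases j <;>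
        simp only [Matrix.add_apply, Matrix.smul_apply, Matrix.one_apply, smul_eq_mul,
          Fin.zero_eta, Fin.mk_one, h01, hA01, mul_zero] <;> norm_num <;> field_simp
      · linear_combination key 1 0
    · push_neg at h10
      have hne : C 0 0 ≠ C 1 1 := by
        intro hEq
        apply hC (C 0 0)
        ext i j
        fin_cases i <;> fin_cases j <;> simp [Matrix.one_apply, h01, h10, hEq]
      have hsub : C 0 0 - C 1 1 ≠ 0 := sub_ne_zero.mpr hne
      have hA01 : A 0 1 = 0 := by
        have h2 : A 0 1 * (C 1 1 - C 0 0) = 0 := by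
          linear_combination key 0 1 - (A 0 0 - A 1 1) * h01
        have := mul_eq_zero.mp h2
        rcases this with h3 | h3
        · exact h3
        · exact absurd (by linear_combination - h3) hsub
      have hA10 : A 1 0 = 0 := by
        have h2 : A 1 0 * (C 0 0 - C 1 1) = 0 := by
          linear_combination key 1 0 - (A 1 1 - A 0 0) * h10
        exact (mul_eq_zero.mp h2).resolve_right hsub
      refine ⟨A 0 0 - ((A 0 0 - A 1 1) / (C 0 0 - C 1 1)) * C 0 0,
        (A 0 0 - A 1 1) / (C 0 0 - C 1 1), ?_⟩
      ext i j
      fin_cases i <;> fin_cases j <;>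
        simp only [Matrix.add_apply, Matrix.smul_apply, Matrix.one_apply, smul_eq_mul,
          Fin.zero_eta, Fin.mk_one, h01, h10, hA01, hA10, mul_zero] <;> norm_num <;> field_simp
      · ring

/-- `PGL₂(ℂ)` contains no subgroup isomorphic to the generalized
dihedral group `⟨x, y ∣ x² = y²⟩`: there is no injective homomorphism from it
into `PGL₂(ℂ)`. -/
theorem no_genDihedral_subgroup_PGL2C (φ : GenDihedral →* PGL2C) :
    ¬ Function.Injective φ := by
  intro hinj
  set a : GenDihedral := PresentedGroup.of true with ha
  set b : GenDihedral := PresentedGroup.of false with hb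
  obtain ⟨A, hA⟩ := QuotientGroup.mk_surjective (φ a)
  obtain ⟨B, hB⟩ := QuotientGroup.mk_surjective (φ b)
  have hrel : φ a ^ 2 = φ b ^ 2 := by
    rw [← map_pow, ← map_pow, genDihedral_rel]
  have hq : (QuotientGroup.mk (A ^ 2) : PGL2C) = QuotientGroup.mk (B ^ 2) := by
    rw [QuotientGroup.mk_pow, QuotientGroup.mk_pow, hA, hB]
    exact hrel
  have hK : (A ^ 2)⁻¹ * B ^ 2 ∈ Subgroup.center (GL (Fin 2) ℂ) := QuotientGroup.eq.mp hq
  set K : GL (Fin 2) ℂ := (A ^ 2)⁻¹ * B ^ 2 with hKdef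
  have hKc : ∀ g : GL (Fin 2) ℂ, g * K⁻¹ = K⁻¹ * g := fun g =>
    Subgroup.mem_center_iff.mp (Subgroup.inv_mem _ hK) g
  have hA2 : A ^ 2 = B ^ 2 * K⁻¹ := by
    rw [hKdef, mul_inv_rev, inv_inv, ← mul_assoc, mul_inv_cancel, one_mul]
  -- B commutes with A ^ 2 in GL
  have hBA2 : B * (A ^ 2) = (A ^ 2) * B := by
    calc B * (A ^ 2) = B * (B ^ 2 * K⁻¹) := by rw [hA2]
      _ = (B * B ^ 2) * K⁻¹ := by rw [mul_assoc]
      _ = (B ^ 2 * B) * K⁻¹ := by rw [((Commute.refl B).pow_right 2).eq]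
      _ = B ^ 2 * (B * K⁻¹) := by rw [mul_assoc]
      _ = B ^ 2 * (K⁻¹ * B) := by rw [hKc B]
      _ = (B ^ 2 * K⁻¹) * B := by rw [mul_assoc]
      _ = (A ^ 2) * B := by rw [← hA2]
  -- pass to matrices
  set C : Matrix (Fin 2) (Fin 2) ℂ := ((A ^ 2 : GL (Fin 2) ℂ) : Matrix (Fin 2) (Fin 2) ℂ)
    with hC
  have hACm : (A : Matrix (Fin 2) (Fin 2) ℂ) * C = C * (A : Matrix (Fin 2) (Fin 2) ℂ) := by
    have h3 : A * (A ^ 2) = (A ^ 2) * A := ((Commute.refl A).pow_right 2).eq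
    have := congrArg (Units.val) h3
    simpa [hC] using this
  have hBCm : (B : Matrix (Fin 2) (Fin 2) ℂ) * C = C * (B : Matrix (Fin 2) (Fin 2) ℂ) := by
    have := congrArg (Units.val) hBA2
    simpa [hC] using this
  by_cases hCs : ∃ p : ℂ, C = p • (1 : Matrix (Fin 2) (Fin 2) ℂ)
  · -- A ^ 2 is scalar, hence central, so φ (a ^ 2) = 1 with a ^ 2 ≠ 1
    obtain ⟨p, hp⟩ := hCs
    have hc : A ^ 2 ∈ Subgroup.center (GL (Fin 2) ℂ) := by
      refine Subgroup.mem_center_iff.mpr fun g => Units.ext ?_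
      show (g : Matrix (Fin 2) (Fin 2) ℂ) * C = C * (g : Matrix (Fin 2) (Fin 2) ℂ)
      rw [hp, smul_mul_assoc, mul_smul_comm, one_mul, mul_one]
    have h1 : φ (a ^ 2) = 1 := by
      rw [map_pow, ← hA, ← QuotientGroup.mk_pow]
      exact (QuotientGroup.eq_one_iff _).mpr hc
    have : a ^ 2 = (1 : GenDihedral) := hinj (by rw [h1, map_one])
    exact genDihedral_sq_ne_one this
  · -- A ^ 2 is not scalar: its centralizer is abelian, so φ a and φ b commute
    push_neg at hCs
    obtain ⟨p, q, hApq⟩ := comm_struct C A hACm hCs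
    obtain ⟨p', q', hBpq⟩ := comm_struct C B hBCm hCs
    have hABm : (A : Matrix (Fin 2) (Fin 2) ℂ) * (B : Matrix (Fin 2) (Fin 2) ℂ)
        = (B : Matrix (Fin 2) (Fin 2) ℂ) * (A : Matrix (Fin 2) (Fin 2) ℂ) := by
      rw [hApq, hBpq]
      simp only [add_mul, mul_add, smul_mul_assoc, mul_smul_comm, one_mul, mul_one,
        smul_smul]
      module
    have hAB : A * B = B * A := Units.ext (by simpa using hABm)
    have h2 : φ (a * b) = φ (b * a) := by
      rw [map_mul, map_mul, ← hA, ← hB, ← QuotientGroup.mk_mul, ← QuotientGroup.mk_mul, hAB]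
    exact genDihedral_not_comm (hinj h2)
end

section
/- Let G be a LERF group, H a finitely generated subgroup of G, and K a finite-index subgroup of H. Then there exists a finite-index subgroup U of G with U ∩ H = K. (The profinite topology on G induces the full profinite topology on every finitely generated subgroup of G.) -/
/-- A group `G` is LERF (subgroup separable) if every finitely generated
subgroup is separable: any element outside it is separated from it in some
finite quotient. -/
def LERF (G : Type) [Group G] : Prop :=
  ∀ H : Subgroup G, H.FG → ∀ g : G, g ∉ H →
    ∃ (Q : Type) (_ : Group Q) (_ : Finite Q) (φ : G →* Q),
      φ g ∉ Subgroup.map φ H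

private theorem Subgroup.FG.map' {G G' : Type*} [Group G] [Group G']
    {P : Subgroup G} (h : P.FG) (e : G →* G') : (P.map e).FG := by
  classical
  obtain ⟨S, hS⟩ := h
  exact ⟨S.image e, by rw [Finset.coe_image, ← MonoidHom.map_closure, hS]⟩

/-- in a LERF group `G`, for any finitely generated subgroup `H`
and any finite-index subgroup `K` of `H`, there is a finite-index subgroup `U`
of `G` with `U ∩ H = K`; i.e. the profinite topology of `G` induces the full
profinite topology on finitely generated subgroups. -/
theorem lerf_induces_full_profinite_topology (G : Type) [Group G]
    (hG : LERF G) (H : Subgroup G) (hH : H.FG) (K : Subgroup H)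
    (hK : K.FiniteIndex) :
    ∃ U : Subgroup G, U.FiniteIndex ∧ Subgroup.comap H.subtype U = K := by
  -- K is finitely generated (Schreier), hence so is its image K' in G
  haveI : Group.FG H := (Group.fg_iff_subgroup_fg H).2 hH
  haveI := hK
  haveI : Group.FG K := Subgroup.fg_of_index_ne_zero K
  have hKfg : K.FG := (Group.fg_iff_subgroup_fg K).1 this
  set K' : Subgroup G := K.map H.subtype with hK'
  have hK'fg : K'.FG := hKfg.map' H.subtype
  have hmemK' : ∀ h : H, (h : G) ∈ K' ↔ h ∈ K := by
    intro h
    constructor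
    · rintro ⟨k, hk, hkh⟩
      have : k = h := Subtype.ext hkh
      rwa [← this]
    · intro hh; exact ⟨h, hh, rfl⟩
  -- index over nontrivial cosets
  haveI : Finite (H ⧸ K) := Subgroup.finite_quotient_of_finiteIndex
  set ι := {q : H ⧸ K // q ≠ QuotientGroup.mk 1}
  -- for each nontrivial coset, a representative not in K'
  have hrep : ∀ q : ι, ((Quotient.out q.1 : H) : G) ∉ K' := by
    intro ⟨q, hq⟩
    rw [hmemK']
    intro hmem
    apply hq
    have : QuotientGroup.mk (Quotient.out q) = q := Quotient.out_eq' q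
    rw [← this]
    apply Quotient.sound'
    rw [QuotientGroup.leftRel_apply]
    simpa using hmem
  choose Q instQ instF φ hφ using fun q : ι => hG K' hK'fg _ (hrep q)
  refine ⟨⨅ q : ι, Subgroup.comap (φ q) (Subgroup.map (φ q) K'), ?_, ?_⟩
  · apply Subgroup.finiteIndex_iInf
    intro q
    letI := instQ q
    letI := instF q
    haveI : Finite (φ q).range := Subtype.finite
    haveI : (φ q).ker.FiniteIndex := Subgroup.finiteIndex_ker (φ q)
    exact Subgroup.finiteIndex_of_le fun x hx => by
      simp only [Subgroup.mem_comap]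
      rw [MonoidHom.mem_ker.mp hx]
      exact Subgroup.one_mem _
  · apply le_antisymm
    · intro h hh
      simp only [Subgroup.mem_comap, Subgroup.mem_iInf, Subgroup.coe_subtype] at hh
      by_contra hhK
      have hq : QuotientGroup.mk h ≠ (QuotientGroup.mk 1 : H ⧸ K) := by
        intro he
        apply hhK
        have := Quotient.exact' he
        rw [QuotientGroup.leftRel_apply] at this
        simpa using this
      set q : ι := ⟨QuotientGroup.mk h, hq⟩
      set x : H := Quotient.out q.1 with hx
      -- x⁻¹ * h ∈ K
      have hxh : x⁻¹ * h ∈ K := by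
        have : (QuotientGroup.mk x : H ⧸ K) = QuotientGroup.mk h := by
          rw [hx]; exact Quotient.out_eq' _
        have := Quotient.exact' this
        rwa [QuotientGroup.leftRel_apply] at this
      -- hence (x : G) ∈ comap (φ q) (map (φ q) K')
      have hxU : (x : G) ∈ Subgroup.comap (φ q) (Subgroup.map (φ q) K') := by
        have h1 : (h : G) ∈ Subgroup.comap (φ q) (Subgroup.map (φ q) K') := hh q
        have h2 : ((x⁻¹ * h : H) : G) ∈ K' := (hmemK' _).mpr hxh
        have h3 : ((x⁻¹ * h : H) : G) ∈ Subgroup.comap (φ q) (Subgroup.map (φ q) K') :=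
          Subgroup.mem_comap.mpr (Subgroup.mem_map_of_mem _ h2)
        have : (x : G) = (h : G) * ((x⁻¹ * h : H) : G)⁻¹ := by
          push_cast
          group
        rw [this]
        exact Subgroup.mul_mem _ h1 (Subgroup.inv_mem _ h3)
      exact hφ q (Subgroup.mem_comap.mp hxU)
    · intro k hk
      simp only [Subgroup.mem_comap, Subgroup.mem_iInf, Subgroup.coe_subtype]
      intro q
      exact Subgroup.mem_comap.mpr (Subgroup.mem_map_of_mem _ ((hmemK' k).mpr hk))
end

section
/- Let G be a torsion-free group that does not contain a subgroup isomorphic to the generalized dihedral group ⟨x, y ∣ x² = y²⟩. Let H be a finite-index subgroup of G such that: (1) H is conjugacy separable; (2) for each nontrivial h ∈ H, the centralizer C_H(h) is a free abelian group of rank at most 2, i.e., isomorphic to ℤⁿ for some n ≤ 2. Then G is conjugacy separable. -/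
/-- A group is conjugacy separable if non-conjugate elements stay non-conjugate
in some finite quotient. -/
def ConjSeparable (G : Type) [Group G] : Prop :=
  ∀ x y : G, ¬ IsConj x y →
    ∃ (Q : Type) (_ : Group Q) (_ : Finite Q) (φ : G →* Q), ¬ IsConj (φ x) (φ y)

section Aux

variable {G : Type*} [Group G]

lemma tf_pow_eq_one (htf : ∀ g : G, g ≠ 1 → ¬IsOfFinOrder g) {g : G} {k : ℕ} (hk : k ≠ 0)
    (h : g ^ k = 1) : g = 1 := by
  by_contra hg
  exact htf g hg (isOfFinOrder_iff_pow_eq_one.2 ⟨k, Nat.pos_of_ne_zero hk, h⟩)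

lemma tf_zpow_eq_one (htf : ∀ g : G, g ≠ 1 → ¬IsOfFinOrder g) {g : G} {k : ℤ} (hk : k ≠ 0)
    (h : g ^ k = 1) : g = 1 := by
  have h' : g ^ (k.natAbs) = 1 := by
    rcases Int.natAbs_eq k with he | he
    · rw [← zpow_natCast, ← he, h]
    · rw [← zpow_natCast, ← neg_neg (k.natAbs : ℤ), ← he, zpow_neg, h, inv_one]
  exact tf_pow_eq_one htf (by simpa using hk) h'

lemma tf_subgroup (htf : ∀ g : G, g ≠ 1 → ¬IsOfFinOrder g) (S : Subgroup G) :
    ∀ g : S, g ≠ 1 → ¬IsOfFinOrder g := by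
  intro g hg hfo
  rcases isOfFinOrder_iff_pow_eq_one.1 hfo with ⟨k, hk, h⟩
  apply hg
  have : (g : G) ^ k = 1 := by
    have := congrArg (Subgroup.subtype S) h
    simpa using this
  have : (g : G) = 1 := tf_pow_eq_one htf hk.ne' this
  exact Subtype.ext (by simpa using this)

/-- A torsion-free group with a central subgroup of finite index is commutative (Schur-type
argument via the transfer homomorphism). -/
lemma comm_of_central_finiteIndex {F : Type*} [Group F] (htf : ∀ g : F, g ≠ 1 → ¬IsOfFinOrder g)
    (Z : Subgroup F) (hfi : Z.FiniteIndex) (hZ : Z ≤ Subgroup.center F) (a b : F) :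
    a * b = b * a := by
  haveI : Z.FiniteIndex := hfi
  haveI : (Subgroup.center F).FiniteIndex := Subgroup.finiteIndex_of_le hZ
  set m := (Subgroup.center F).index with hm
  have hm0 : m ≠ 0 := Subgroup.FiniteIndex.index_ne_zero
  set ψ := MonoidHom.transferCenterPow F with hψ
  have happ : ∀ g : F, (ψ g : F) = g ^ m := fun g => MonoidHom.transferCenterPow_apply g
  have hinj : Function.Injective ψ := by
    rw [← MonoidHom.ker_eq_bot_iff]
    apply (Subgroup.eq_bot_iff_forall _).2
    intro g hg
    have : (ψ g : F) = 1 := by rw [MonoidHom.mem_ker.1 hg]; rfl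
    rw [happ g] at this
    exact tf_pow_eq_one htf hm0 this
  have hcenter : (a * b) ^ m ∈ Subgroup.center F := by
    have := (ψ (a * b)).2
    rwa [happ (a * b)] at this
  have key : ψ (a * b) = ψ (b * a) := by
    apply Subtype.ext
    rw [happ, happ]
    have h1 : b * a = a⁻¹ * (a * b) * a⁻¹⁻¹ := by group
    rw [h1, conj_pow]
    have hc := (Subgroup.mem_center_iff.1 hcenter) a⁻¹
    rw [hc]
    group
  exact hinj key

end Aux


namespace KleinAux

abbrev krels : Set (FreeGroup Bool) :=
  {FreeGroup.of true ^ 2 * (FreeGroup.of false ^ 2)⁻¹}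

def tK : GenDihedral := PresentedGroup.of (rels := krels) true
def yK : GenDihedral := PresentedGroup.of (rels := krels) false
def aK : GenDihedral := yK⁻¹ * tK

lemma hsq : tK ^ 2 = yK ^ 2 := by
  have hmem : (FreeGroup.of true ^ 2 * (FreeGroup.of false ^ 2)⁻¹) ∈
      Subgroup.normalClosure krels :=
    Subgroup.subset_normalClosure rfl
  have h1 : (PresentedGroup.mk krels) (FreeGroup.of true ^ 2 * (FreeGroup.of false ^ 2)⁻¹)
      = 1 := (QuotientGroup.eq_one_iff _).2 hmem
  have h2 : tK ^ 2 * (yK ^ 2)⁻¹ = 1 := by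
    rw [← h1]
    simp [tK, yK, PresentedGroup.of]
  have := mul_inv_eq_one.1 h2
  exact this

lemma hconj1 : tK * aK * tK⁻¹ = aK⁻¹ := by
  show tK * (yK⁻¹ * tK) * tK⁻¹ = (yK⁻¹ * tK)⁻¹
  have key : tK * yK⁻¹ = tK⁻¹ * yK := by
    calc tK * yK⁻¹ = tK * (yK ^ 2)⁻¹ * yK := by group
    _ = tK * (tK ^ 2)⁻¹ * yK := by rw [hsq]
    _ = tK⁻¹ * yK := by group
  calc tK * (yK⁻¹ * tK) * tK⁻¹ = tK * yK⁻¹ := by group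
  _ = tK⁻¹ * yK := key
  _ = (yK⁻¹ * tK)⁻¹ := by group

lemma hconjz : ∀ k : ℤ, tK * aK ^ k * tK⁻¹ = aK ^ (-k) := by
  intro k
  have : (MulAut.conj tK) (aK ^ k) = ((MulAut.conj tK) aK) ^ k := map_zpow _ _ _
  simpa [MulAut.conj_apply, hconj1, zpow_neg] using this

lemma hconjz' : ∀ k : ℤ, tK⁻¹ * aK ^ k * tK = aK ^ (-k) := by
  intro k
  have h := hconjz (-k)
  have : tK⁻¹ * (tK * aK ^ (-k) * tK⁻¹) * tK = tK⁻¹ * aK ^ (- -k) * tK := by rw [h]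
  simpa [neg_neg] using this.symm.trans (by group)

lemma hconj_exists : ∀ (j k : ℤ), ∃ k' : ℤ, tK ^ j * aK ^ k * tK ^ (-j) = aK ^ k' := by
  intro j
  induction j using Int.induction_on with
  | zero => intro k; exact ⟨k, by simp⟩
  | succ i ih =>
      intro k
      obtain ⟨k', hk'⟩ := ih k
      refine ⟨-k', ?_⟩
      have expand : tK ^ ((i : ℤ) + 1) * aK ^ k * tK ^ (-((i : ℤ) + 1))
          = tK * (tK ^ (i : ℤ) * aK ^ k * tK ^ (-(i : ℤ))) * tK⁻¹ := by group
      rw [expand, hk', hconjz]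
  | pred i ih =>
      intro k
      obtain ⟨k', hk'⟩ := ih k
      refine ⟨-k', ?_⟩
      have expand : tK ^ (-(i : ℤ) - 1) * aK ^ k * tK ^ (-(-(i : ℤ) - 1))
          = tK⁻¹ * (tK ^ (-(i : ℤ)) * aK ^ k * tK ^ (-(-(i : ℤ)))) * tK := by group
      rw [expand, hk', hconjz']

def S : Subgroup GenDihedral where
  carrier := {g | ∃ i j : ℤ, g = aK ^ i * tK ^ j}
  one_mem' := ⟨0, 0, by simp⟩
  mul_mem' := by
    rintro g g' ⟨i, j, rfl⟩ ⟨k, l, rfl⟩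
    obtain ⟨k', hk'⟩ := hconj_exists j k
    refine ⟨i + k', j + l, ?_⟩
    have : aK ^ i * tK ^ j * (aK ^ k * tK ^ l)
        = aK ^ i * (tK ^ j * aK ^ k * tK ^ (-j)) * tK ^ (j + l) := by group
    rw [this, hk', ← zpow_add]
  inv_mem' := by
    rintro g ⟨i, j, rfl⟩
    obtain ⟨k', hk'⟩ := hconj_exists (-j) (-i)
    refine ⟨k', -j, ?_⟩
    have : (aK ^ i * tK ^ j)⁻¹ = (tK ^ (-j) * aK ^ (-i) * tK ^ (-(-j))) * tK ^ (-j) := by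
      group
    rw [this, hk']

lemma mem_S : ∀ g : GenDihedral, ∃ i j : ℤ, g = aK ^ i * tK ^ j := by
  intro g
  have : ∀ g : GenDihedral, g ∈ S := by
    apply PresentedGroup.generated_by
    intro b
    cases b
    · -- of false = yK = aK ^ 1 * tK ^ 1
      refine ⟨1, 1, ?_⟩
      show yK = aK ^ (1:ℤ) * tK ^ (1:ℤ)
      simp only [zpow_one, aK]
      calc yK = yK⁻¹ * yK ^ 2 := by group
      _ = yK⁻¹ * tK ^ 2 := by rw [hsq]
      _ = yK⁻¹ * tK * tK := by rw [pow_two tK, ← mul_assoc]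
    · exact ⟨0, 1, by simp [tK]⟩
  exact this g

end KleinAux

/-- If a torsion-free group contains `d, v` with `d v d⁻¹ = v⁻¹`, `v` commuting with `d²`,
and `v, d²` "independent", then it contains a copy of the Klein bottle group. -/
lemma genDihedral_embeds {D : Type*} [Group D] (d v : D)
    (hc : d * v * d⁻¹ = v⁻¹) (hvz : v * d ^ 2 = d ^ 2 * v)
    (hik : ∀ i m : ℤ, v ^ i * (d ^ 2) ^ m = 1 → i = 0 ∧ m = 0) :
    ∃ φ : GenDihedral →* D, Function.Injective φ := by
  classical
  have hdv : d * v = v⁻¹ * d := by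
    calc d * v = (d * v * d⁻¹) * d := by group
    _ = v⁻¹ * d := by rw [hc]
  set f : Bool → D := fun b => if b then d else d * v⁻¹ with hf
  have hrel : ∀ r ∈ KleinAux.krels, (FreeGroup.lift f) r = 1 := by
    intro r hr
    have : r = FreeGroup.of true ^ 2 * (FreeGroup.of false ^ 2)⁻¹ := hr
    subst this
    have hft : f true = d := rfl
    have hff : f false = d * v⁻¹ := rfl
    simp only [map_mul, map_pow, map_inv, FreeGroup.lift_apply_of, hft, hff]
    have hsq' : (d * v⁻¹) ^ 2 = d ^ 2 := by
      have hdv' : d * v⁻¹ * d = d * d * v := by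
        have : v⁻¹ * d = d * v := hdv.symm
        calc d * v⁻¹ * d = d * (v⁻¹ * d) := by group
        _ = d * (d * v) := by rw [this]
        _ = d * d * v := by group
      calc (d * v⁻¹) ^ 2 = (d * v⁻¹ * d) * v⁻¹ := by rw [pow_two, ← mul_assoc]
      _ = d * d * v * v⁻¹ := by rw [hdv']
      _ = d ^ 2 := by rw [pow_two]; group
    rw [hsq']
    group
  have φt : PresentedGroup.toGroup hrel KleinAux.tK = d := PresentedGroup.toGroup.of hrel
  have φy : PresentedGroup.toGroup hrel KleinAux.yK = d * v⁻¹ := PresentedGroup.toGroup.of hrel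
  have φa : PresentedGroup.toGroup hrel KleinAux.aK = v := by
    have ha : KleinAux.aK = KleinAux.yK⁻¹ * KleinAux.tK := rfl
    rw [ha, map_mul, map_inv, φy, φt]
    group
  have hinj : Function.Injective (PresentedGroup.toGroup hrel) := by
    rw [injective_iff_map_eq_one]
    intro g hg
    obtain ⟨i, j, rfl⟩ := KleinAux.mem_S g
    simp only [map_mul, map_zpow, φa, φt] at hg
    rcases Int.even_or_odd j with ⟨m, hm⟩ | ⟨m, hm⟩
    · -- even case : j = m + m
      have hdj : d ^ j = (d ^ 2) ^ m := by
        rw [hm]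
        rw [← zpow_natCast d 2, ← zpow_mul]
        congr 1
        ring
      rw [hdj] at hg
      obtain ⟨hi, hmz⟩ := hik i m hg
      subst hi
      rw [hm, hmz]
      simp
    · -- odd case : j = 2 * m + 1
      exfalso
      have hdj : d ^ j = (d ^ 2) ^ m * d := by
        rw [hm, zpow_add, zpow_one, ← zpow_natCast d 2, ← zpow_mul]
        norm_num
      rw [hdj] at hg
      have hd : d = ((d ^ 2) ^ m)⁻¹ * v ^ (-i) := by
        have : v ^ i * ((d ^ 2) ^ m * d) = 1 := hg
        calc d = ((d ^ 2) ^ m)⁻¹ * v ^ (-i) * (v ^ i * ((d ^ 2) ^ m * d)) := by group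
        _ = ((d ^ 2) ^ m)⁻¹ * v ^ (-i) * 1 := by rw [this]
        _ = ((d ^ 2) ^ m)⁻¹ * v ^ (-i) := by group
      have hc0 : Commute v (d ^ 2) := hvz
      have hcomm : Commute v ((d ^ 2) ^ m) := hc0.zpow_right m
      have hvv : d * v * d⁻¹ = v := by
        obtain ⟨w, hw⟩ : ∃ w, (d ^ 2) ^ m = w := ⟨_, rfl⟩
        rw [hw] at hd hcomm
        rw [hd]
        calc w⁻¹ * v ^ (-i) * v * (w⁻¹ * v ^ (-i))⁻¹
            = w⁻¹ * (v ^ (-i) * v * v ^ i) * w := by group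
        _ = w⁻¹ * v * w := by
              have h2 : v ^ (-i) * v * v ^ i = v := by group
              rw [h2]
        _ = w⁻¹ * (w * v) := by rw [← hcomm.eq]; group
        _ = v := by group
      have hv2 : v ^ (2:ℤ) * (d ^ 2) ^ (0:ℤ) = 1 := by
        rw [zpow_zero, mul_one]
        have hvinv : v⁻¹ = v := by rw [← hc, hvv]
        calc v ^ (2:ℤ) = v⁻¹ * v := by rw [hvinv, zpow_two]
        _ = 1 := by group
      have := (hik 2 0 hv2).1
      omega


  exact ⟨PresentedGroup.toGroup hrel, hinj⟩


/-- An integer 2×2 matrix of odd order fixing a nonzero vector is the identity. -/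
lemma matrix_odd_order_fixed {p : ℕ} (hp : Odd p) (T : Matrix (Fin 2) (Fin 2) ℤ)
    (hT : T ^ p = 1) (w : Fin 2 → ℤ) (hw : w ≠ 0) (hfix : T.mulVec w = w) : T = 1 := by
  have hp0 : p ≠ 0 := by rcases hp with ⟨k, hk⟩; omega
  have hfix' : ∀ i : Fin 2, T i 0 * w 0 + T i 1 * w 1 = w i := by
    intro i
    have := congrFun hfix i
    simpa [Matrix.mulVec, dotProduct, Fin.sum_univ_two] using this
  set g : ℕ := Int.gcd (w 0) (w 1) with hgdef
  have hgpos : 0 < g := by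
    rcases Nat.eq_zero_or_pos g with h0 | h
    · exfalso
      apply hw
      have h01 := Int.gcd_eq_zero_iff.1 h0
      funext i
      fin_cases i
      · simpa using h01.1
      · simpa using h01.2
    · exact h
  have hgz : (g : ℤ) ≠ 0 := by exact_mod_cast hgpos.ne'
  set a : ℤ := w 0 / g with hadef
  set b : ℤ := w 1 / g with hbdef
  have hwa : w 0 = g * a := by
    rw [hadef, Int.mul_ediv_cancel' (Int.gcd_dvd_left _ _)]
  have hwb : w 1 = g * b := by
    rw [hbdef, Int.mul_ediv_cancel' (Int.gcd_dvd_right _ _)]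
  have hab : Int.gcd a b = 1 := Int.gcd_div_gcd_div_gcd hgpos
  have hTa : T 0 0 * a + T 0 1 * b = a := by
    apply mul_left_cancel₀ hgz
    have h := hfix' 0
    rw [hwa, hwb] at h
    linear_combination h
  have hTb : T 1 0 * a + T 1 1 * b = b := by
    apply mul_left_cancel₀ hgz
    have h := hfix' 1
    rw [hwa, hwb] at h
    linear_combination h
  obtain ⟨x, y, hxy⟩ := Int.isCoprime_iff_gcd_eq_one.2 hab
  set P : Matrix (Fin 2) (Fin 2) ℤ := !![a, -y; b, x] with hP
  set Q : Matrix (Fin 2) (Fin 2) ℤ := !![x, y; -b, a] with hQ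
  have hQP : Q * P = 1 := by
    rw [hP, hQ, Matrix.mul_fin_two, Matrix.one_fin_two]
    have h1 : x * a + y * b = 1 := hxy
    have h2 : x * -y + y * x = 0 := by ring
    have h3 : -b * a + a * b = 0 := by ring
    have h4 : -b * -y + a * x = 1 := by linear_combination hxy
    rw [h1, h2, h3, h4]
  have hPQ : P * Q = 1 := by
    rw [hP, hQ, Matrix.mul_fin_two, Matrix.one_fin_two]
    have h1 : a * x + -y * -b = 1 := by linear_combination hxy
    have h2 : a * y + -y * a = 0 := by ring
    have h3 : b * x + x * -b = 0 := by ring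
    have h4 : b * y + x * a = 1 := by linear_combination hxy
    rw [h1, h2, h3, h4]
  set U : Matrix (Fin 2) (Fin 2) ℤ := Q * T * P with hU
  have hUk : ∀ k : ℕ, U ^ k = Q * T ^ k * P := by
    intro k
    induction k with
    | zero => simp [hQP]
    | succ k ih =>
        rw [pow_succ, ih, hU, pow_succ]
        calc Q * T ^ k * P * (Q * T * P) = Q * T ^ k * (P * Q) * T * P := by
              noncomm_ring
        _ = Q * (T ^ k * T) * P := by rw [hPQ]; noncomm_ring
  have hUp : U ^ p = 1 := by rw [hUk p, hT, mul_one, hQP]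
  have hUfin : U = !![x * T 0 0 + y * T 1 0, x * T 0 1 + y * T 1 1;
      -b * T 0 0 + a * T 1 0, -b * T 0 1 + a * T 1 1] * P := by
    rw [hU, hQ]
    congr 1
    rw [Matrix.eta_fin_two T, Matrix.mul_fin_two]
    simp
  have hU00 : U 0 0 = 1 := by
    rw [hUfin, hP, Matrix.mul_fin_two]
    have : (x * T 0 0 + y * T 1 0) * a + (x * T 0 1 + y * T 1 1) * b = 1 := by
      linear_combination x * hTa + y * hTb + hxy
    simpa using this
  have hU10 : U 1 0 = 0 := by
    rw [hUfin, hP, Matrix.mul_fin_two]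
    have : (-b * T 0 0 + a * T 1 0) * a + (-b * T 0 1 + a * T 1 1) * b = 0 := by
      linear_combination (-b) * hTa + a * hTb
    simpa using this
  set c : ℤ := U 0 1 with hc
  set e : ℤ := U 1 1 with he
  have hUeta : U = !![1, c; 0, e] := by
    rw [hc, he, ← hU00, ← hU10]
    exact Matrix.eta_fin_two U
  have hdet : e ^ p = 1 := by
    have h1 : (U ^ p).det = 1 := by rw [hUp, Matrix.det_one]
    rw [Matrix.det_pow, hUeta, Matrix.det_fin_two_of] at h1
    simpa using h1
  have hp1 : p - 1 + 1 = p := Nat.succ_pred_eq_of_pos (Nat.pos_of_ne_zero hp0)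
  have hee : e = 1 := by
    have hunit : IsUnit e := by
      apply IsUnit.of_mul_eq_one (a := e) (e ^ (p - 1))
      calc e * e ^ (p - 1) = e ^ (p - 1) * e := mul_comm _ _
      _ = e ^ (p - 1 + 1) := (pow_succ e (p - 1)).symm
      _ = e ^ p := by rw [hp1]
      _ = 1 := hdet
    rcases Int.isUnit_iff.1 hunit with h | h
    · exact h
    · exfalso
      rw [h, hp.neg_one_pow] at hdet
      norm_num at hdet
  rw [hee] at hUeta
  have hpow : ∀ k : ℕ, U ^ k = !![1, (k : ℤ) * c; 0, 1] := by
    intro k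
    induction k with
    | zero => rw [pow_zero, Matrix.one_fin_two]; norm_num
    | succ k ih =>
        rw [pow_succ, ih, hUeta, Matrix.mul_fin_two]
        have e11 : (1:ℤ) * 1 + (k:ℤ) * c * 0 = 1 := by ring
        have e12 : (1:ℤ) * c + (k:ℤ) * c * 1 = ((k:ℤ)+1) * c := by ring
        have e21 : (0:ℤ) * 1 + 1 * 0 = 0 := by ring
        have e22 : (0:ℤ) * c + 1 * 1 = 1 := by ring
        rw [e11, e12, e21, e22]
        norm_num
  have hcz : c = 0 := by
    have h1 := hpow p
    rw [hUp, Matrix.one_fin_two] at h1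
    have h2 : (0:ℤ) = (p:ℤ) * c := by
      have := congrFun (congrFun h1 0) 1
      simpa using this
    rcases mul_eq_zero.1 h2.symm with h | h
    · exact absurd (by exact_mod_cast h) hp0
    · exact h
  rw [hcz] at hUeta
  have hU1 : U = 1 := by rw [hUeta, Matrix.one_fin_two]
  have hrecover : P * U * Q = T := by
    rw [hU]
    calc P * (Q * T * P) * Q = (P * Q) * T * (P * Q) := by noncomm_ring
    _ = T := by rw [hPQ]; noncomm_ring
  rw [← hrecover, hU1, mul_one, hPQ]

/-- Centralizers of normal subgroups are normal. -/
lemma centralizer_normal {D : Type*} [Group D] (S : Subgroup D) (hS : S.Normal) :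
    (Subgroup.centralizer (S : Set D)).Normal := by
  constructor
  intro e he g
  rw [Subgroup.mem_centralizer_iff] at he ⊢
  intro h hh
  have hh' : g⁻¹ * h * g ∈ S := by
    have := hS.conj_mem h hh g⁻¹
    simpa using this
  have hkey := he _ hh'
  calc h * (g * e * g⁻¹) = g * ((g⁻¹ * h * g) * e) * g⁻¹ := by group
  _ = g * (e * (g⁻¹ * h * g)) * g⁻¹ := by rw [hkey]
  _ = (g * e * g⁻¹) * h := by group

/-- The main structural lemma: a torsion-free group, with no Klein-bottle subgroup,
containing a free abelian subgroup of rank at most 2 of finite index, is abelian. -/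
lemma comm_of_virtually_free_abelian {D : Type*} [Group D] (htf : ∀ g : D, g ≠ 1 → ¬IsOfFinOrder g)
    (hnd : ∀ φ : GenDihedral →* D, ¬ Function.Injective φ)
    {n : ℕ} (hn : n ≤ 2) (B : Subgroup D) (hfi : B.FiniteIndex)
    (ψ : B ≃* Multiplicative (Fin n → ℤ)) :
    ∀ x y : D, x * y = y * x := by
  classical
  haveI := hfi
  have hBcomm : ∀ u v : B, u * v = v * u := by
    intro u v
    apply ψ.injective
    rw [map_mul, map_mul, mul_comm]
  set B₀ : Subgroup D := B.normalCore with hB₀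
  haveI hB₀n : B₀.Normal := Subgroup.normalCore_normal B
  haveI : B₀.FiniteIndex := Subgroup.finiteIndex_normalCore B
  have hB₀le : B₀ ≤ B := Subgroup.normalCore_le B
  have hB₀comm : ∀ u v : D, u ∈ B₀ → v ∈ B₀ → u * v = v * u := by
    intro u v hu hv
    have := hBcomm ⟨u, hB₀le hu⟩ ⟨v, hB₀le hv⟩
    exact congrArg Subtype.val this
  set E : Subgroup D := Subgroup.centralizer (B₀ : Set D) with hE
  have hBE : B₀ ≤ E := by
    intro b hb
    exact Subgroup.mem_centralizer_iff.2 fun h hh => hB₀comm h b hh hb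
  haveI : E.FiniteIndex := Subgroup.finiteIndex_of_le hBE
  haveI hEn : E.Normal := centralizer_normal B₀ hB₀n
  have hEcomm : ∀ u v : E, u * v = v * u := by
    intro u v
    apply comm_of_central_finiteIndex (tf_subgroup htf E) (B₀.subgroupOf E)
      (Subgroup.instFiniteIndex_subgroupOf B₀ E)
    intro w hw
    rw [Subgroup.mem_center_iff]
    intro g
    apply Subtype.ext
    have hgE : (g : D) ∈ Subgroup.centralizer (B₀ : Set D) := g.2
    rw [Subgroup.mem_centralizer_iff] at hgE
    have hwB : (w : D) ∈ B₀ := Subgroup.mem_subgroupOf.1 hw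
    rw [Subgroup.coe_mul, Subgroup.coe_mul]
    exact (hgE _ hwB).symm
  set A : Subgroup D := Subgroup.centralizer (E : Set D) with hA
  have hEA : E ≤ A := by
    intro e he
    apply Subgroup.mem_centralizer_iff.2
    intro h hh
    exact congrArg Subtype.val (hEcomm ⟨h, hh⟩ ⟨e, he⟩)
  haveI : A.FiniteIndex := Subgroup.finiteIndex_of_le (hBE.trans hEA)
  haveI hAn : A.Normal := centralizer_normal E hEn
  have hAcomm : ∀ u v : D, u ∈ A → v ∈ A → u * v = v * u := by
    intro u v hu hv
    have : (⟨u, hu⟩ : A) * ⟨v, hv⟩ = ⟨v, hv⟩ * ⟨u, hu⟩ := by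
      apply comm_of_central_finiteIndex (tf_subgroup htf A) (E.subgroupOf A)
        (Subgroup.instFiniteIndex_subgroupOf E A)
      intro w hw
      rw [Subgroup.mem_center_iff]
      intro g
      apply Subtype.ext
      have hgA : (g : D) ∈ Subgroup.centralizer (E : Set D) := g.2
      rw [Subgroup.mem_centralizer_iff] at hgA
      rw [Subgroup.coe_mul, Subgroup.coe_mul]
      exact (hgA _ (Subgroup.mem_subgroupOf.1 hw)).symm
    exact congrArg Subtype.val this
  have hAself : ∀ g : D, (∀ a ∈ A, g * a = a * g) → g ∈ A := by
    intro g hg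
    apply Subgroup.mem_centralizer_iff.2
    intro h hh
    exact (hg h (hEA hh)).symm
  by_cases hAtop : A = ⊤
  · intro x y
    exact hAcomm x y (hAtop ▸ Subgroup.mem_top x) (hAtop ▸ Subgroup.mem_top y)
  exfalso
  -- quotient by A and find an element of prime order
  haveI : Finite (D ⧸ A) := by
    apply Nat.finite_of_card_ne_zero
    exact Subgroup.FiniteIndex.index_ne_zero
  haveI : Nontrivial (D ⧸ A) := by
    obtain ⟨d0, hd0⟩ : ∃ d0 : D, d0 ∉ A := by
      by_contra hcon
      push_neg at hcon
      exact hAtop ((Subgroup.eq_top_iff' A).2 hcon)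
    refine ⟨QuotientGroup.mk d0, 1, ?_⟩
    intro hcon
    exact hd0 ((QuotientGroup.eq_one_iff d0).1 hcon)
  set p : ℕ := (Nat.card (D ⧸ A)).minFac with hpdef
  have hcard1 : Nat.card (D ⧸ A) ≠ 1 := by
    have := Finite.one_lt_card (α := D ⧸ A)
    omega
  have hpprime : p.Prime := Nat.minFac_prime hcard1
  haveI : Fact p.Prime := ⟨hpprime⟩
  haveI : Fintype (D ⧸ A) := Fintype.ofFinite _
  have hpdvd : p ∣ Fintype.card (D ⧸ A) := by
    rw [← Nat.card_eq_fintype_card]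
    exact Nat.minFac_dvd _
  obtain ⟨q, hq⟩ := exists_prime_orderOf_dvd_card p hpdvd
  set d : D := Quotient.out q with hd
  have hmkd : QuotientGroup.mk d = q := QuotientGroup.out_eq' q
  have hdA : d ∉ A := by
    intro hcon
    have : q = 1 := by rw [← hmkd]; exact (QuotientGroup.eq_one_iff d).2 hcon
    rw [this] at hq
    simp at hq
    exact hpprime.one_lt.ne' hq.symm
  set z : D := d ^ p with hz
  have hzA : z ∈ A := by
    have : QuotientGroup.mk z = (1 : D ⧸ A) := by
      have : QuotientGroup.mk z = q ^ p := by rw [hz, ← hmkd]; rfl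
      rw [this, ← hq, pow_orderOf_eq_one]
    exact (QuotientGroup.eq_one_iff z).1 this
  have hτin : ∀ a ∈ A, d * a * d⁻¹ ∈ A := fun a ha => hAn.conj_mem a ha d
  have hτp : ∀ a ∈ A, d ^ p * a * (d ^ p)⁻¹ = a := by
    intro a ha
    have hcz : z * a = a * z := hAcomm z a hzA ha
    calc d ^ p * a * (d ^ p)⁻¹ = z * a * z⁻¹ := by rw [hz]
    _ = a * z * z⁻¹ := by rw [hcz]
    _ = a := by group
  obtain ⟨a₀, ha₀A, ha₀ne⟩ : ∃ a₀, a₀ ∈ A ∧ d * a₀ * d⁻¹ ≠ a₀ := by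
    by_contra hcon
    push_neg at hcon
    apply hdA
    apply hAself
    intro a ha
    have := hcon a ha
    calc d * a = (d * a * d⁻¹) * d := by group
    _ = a * d := by rw [this]
  have hdne1 : d ≠ 1 := fun hcon => hdA (hcon ▸ A.one_mem)
  have hzne1 : z ≠ 1 := by
    intro hcon
    exact hdne1 (tf_pow_eq_one htf hpprime.ne_zero hcon)
  rcases hpprime.eq_two_or_odd' with hp2 | hpodd
  · -- p = 2 : construct a Klein bottle subgroup
    set v : D := a₀⁻¹ * (d * a₀ * d⁻¹) with hv
    have hvA : v ∈ A := A.mul_mem (A.inv_mem ha₀A) (hτin a₀ ha₀A)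
    have hv1 : v ≠ 1 := by
      intro hcon
      apply ha₀ne
      have h1 : a₀ * v = a₀ := by rw [hcon, mul_one]
      calc d * a₀ * d⁻¹ = a₀ * v := by rw [hv]; group
      _ = a₀ := h1
    have hd2 : d ^ 2 * a₀ * (d ^ 2)⁻¹ = a₀ := by rw [← hp2]; exact hτp a₀ ha₀A
    have hvconj : d * v * d⁻¹ = v⁻¹ := by
      rw [hv]
      calc d * (a₀⁻¹ * (d * a₀ * d⁻¹)) * d⁻¹
          = (d * a₀ * d⁻¹)⁻¹ * (d ^ 2 * a₀ * (d ^ 2)⁻¹) := by group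
      _ = (d * a₀ * d⁻¹)⁻¹ * a₀ := by rw [hd2]
      _ = (a₀⁻¹ * (d * a₀ * d⁻¹))⁻¹ := by group
    have hd2A : d ^ 2 ∈ A := by rw [← hp2]; exact hzA
    have hvz : v * d ^ 2 = d ^ 2 * v := hAcomm v (d ^ 2) hvA hd2A
    have hd2ne : d ^ 2 ≠ 1 := by
      have h1 : d ^ 2 = z := by rw [hz, hp2]
      rw [h1]; exact hzne1
    have hik : ∀ i m : ℤ, v ^ i * (d ^ 2) ^ m = 1 → i = 0 ∧ m = 0 := by
      intro i m him
      have him2 : v ^ (-i) * (d ^ 2) ^ m = 1 := by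
        have h1 : (MulAut.conj d) (v ^ i * (d ^ 2) ^ m) = 1 := by rw [him]; simp
        rw [map_mul, map_zpow, map_zpow] at h1
        have hcv : (MulAut.conj d) v = v⁻¹ := by
          rw [MulAut.conj_apply]; exact hvconj
        have hcz2 : (MulAut.conj d) (d ^ 2) = d ^ 2 := by
          rw [MulAut.conj_apply]; group
        rw [hcv, hcz2] at h1
        rw [← h1, inv_zpow, ← zpow_neg]
      have hw : (d ^ 2) ^ m = v ^ i := by
        calc (d ^ 2) ^ m = v ^ i * (v ^ (-i) * (d ^ 2) ^ m) := by group
        _ = v ^ i := by rw [him2, mul_one]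
      have h2i : v ^ (2 * i) = 1 := by
        have him' : v ^ i * v ^ i = 1 := by rw [hw] at him; exact him
        calc v ^ (2 * i) = v ^ i * v ^ i := by rw [← zpow_add]; ring_nf
        _ = 1 := him'
      have hi0 : i = 0 := by
        by_contra hi
        exact hv1 (tf_zpow_eq_one htf (by omega) h2i)
      refine ⟨hi0, ?_⟩
      rw [hi0] at him
      simp only [zpow_zero, one_mul] at him
      by_contra hm
      exact hd2ne (tf_zpow_eq_one htf hm him)
    obtain ⟨φ, hφ⟩ := genDihedral_embeds d v hvconj hvz hik
    exact hnd φ hφ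
  · -- p odd
    by_cases hz1 : z = 1
    · exact hdne1 (tf_pow_eq_one htf hpprime.ne_zero (hz ▸ hz1))
    letI commA : CommGroup A :=
      { (inferInstance : Group A) with
        mul_comm := fun u v => Subtype.ext (hAcomm u v u.2 v.2) }
    haveI : Finite (D ⧸ B₀) := Nat.finite_of_card_ne_zero Subgroup.FiniteIndex.index_ne_zero
    set m₀ : ℕ := Nat.card (D ⧸ B₀) with hm₀def
    have hm₀0 : m₀ ≠ 0 := Nat.card_pos.ne'
    have hm₀mem : ∀ g : D, g ^ m₀ ∈ B₀ := by
      intro g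
      have h1 : (QuotientGroup.mk' B₀) (g ^ m₀) = 1 := by
        rw [map_pow]
        exact pow_card_eq_one'
      exact (QuotientGroup.eq_one_iff _).1 h1
    have hpowmem : ∀ a : A, ((a : D) ^ m₀) ∈ B := fun a => hB₀le (hm₀mem a)
    set jf : A → Multiplicative (Fin n → ℤ) := fun a => ψ ⟨(a : D) ^ m₀, hpowmem a⟩ with hjf
    have hjmul : ∀ u v : A, jf (u * v) = jf u * jf v := by
      intro u v
      rw [hjf]
      simp only
      rw [← map_mul]
      congr 1
      apply Subtype.ext
      show ((u * v : A) : D) ^ m₀ = (u : D) ^ m₀ * (v : D) ^ m₀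
      have hcomm : Commute (u : D) (v : D) := hAcomm u v u.2 v.2
      exact hcomm.mul_pow m₀
    set j : A →* Multiplicative (Fin n → ℤ) := MonoidHom.mk' jf hjmul with hj
    have hjinj : Function.Injective j := by
      rw [injective_iff_map_eq_one]
      intro u hu
      have h1 : (⟨(u : D) ^ m₀, hpowmem u⟩ : B) = 1 := by
        apply ψ.injective
        rw [map_one]
        exact hu
      have h2 : (u : D) ^ m₀ = 1 := congrArg Subtype.val h1
      exact Subtype.ext (tf_pow_eq_one htf hm₀0 h2)
    set jadd : Additive A →+ (Fin n → ℤ) :=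
      AddMonoidHom.mk' (fun a => Multiplicative.toAdd (j a.toMul))
        (fun u v => congrArg Multiplicative.toAdd (map_mul j u.toMul v.toMul)) with hjadd
    set jlin : Additive A →ₗ[ℤ] (Fin n → ℤ) := jadd.toIntLinearMap with hjlin
    have hjlininj : Function.Injective jlin := by
      intro u v huv
      have h1 : j u.toMul = j v.toMul := Multiplicative.toAdd.injective huv
      exact Additive.toMul.injective (hjinj h1)
    set τf : A → A := fun a => ⟨d * a * d⁻¹, hτin a a.2⟩ with hτf
    have hτmul : ∀ u v : A, τf (u * v) = τf u * τf v := by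
      intro u v
      apply Subtype.ext
      show d * (↑u * ↑v) * d⁻¹ = (d * ↑u * d⁻¹) * (d * ↑v * d⁻¹)
      group
    set τmul : A →* A := MonoidHom.mk' τf hτmul with hτmul'
    set τadd : Additive A →+ Additive A :=
      AddMonoidHom.mk' (fun a => Additive.ofMul (τf a.toMul))
        (fun u v => congrArg Additive.ofMul (hτmul u.toMul v.toMul)) with hτadd
    set τlin : Module.End ℤ (Additive A) := τadd.toIntLinearMap with hτlin
    have hτiter : ∀ (k : ℕ) (u : A), ((τf^[k] u : A) : D) = d ^ k * u * (d ^ k)⁻¹ := by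
      intro k
      induction k with
      | zero => intro u; simp
      | succ k ih =>
          intro u
          rw [Function.iterate_succ_apply']
          have h1 : ((τf (τf^[k] u) : A) : D) = d * ((τf^[k] u : A) : D) * d⁻¹ := rfl
          rw [h1, ih u]
          calc d * (d ^ k * ↑u * (d ^ k)⁻¹) * d⁻¹ = (d * d ^ k) * ↑u * (d * d ^ k)⁻¹ := by
                group
          _ = d ^ (k + 1) * ↑u * (d ^ (k + 1))⁻¹ := by rw [← pow_succ']
    have hτlinp : τlin ^ p = 1 := by
      apply LinearMap.ext
      intro u
      rw [Module.End.pow_apply, Module.End.one_apply]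
      have hit : ∀ k : ℕ, (⇑τlin)^[k] u = Additive.ofMul (τf^[k] u.toMul) := by
        intro k
        induction k with
        | zero => rfl
        | succ k ih => rw [Function.iterate_succ_apply', Function.iterate_succ_apply', ih]; rfl
      rw [hit p]
      have hcoord : ((τf^[p] u.toMul : A) : D) = ((u.toMul : A) : D) := by
        rw [hτiter p u.toMul]
        exact hτp _ (u.toMul).2
      have h2 : τf^[p] u.toMul = u.toMul := Subtype.ext hcoord
      rw [h2]
      rfl
    set M : Submodule ℤ (Fin n → ℤ) := LinearMap.range jlin with hM
    set eqv : Additive A ≃ₗ[ℤ] M := LinearEquiv.ofInjective jlin hjlininj with heqv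
    set σ : Module.End ℤ M := eqv.conj τlin with hσ
    have hconj_one : eqv.conj (1 : Module.End ℤ (Additive A)) = 1 := by
      conv_lhs => rw [Module.End.one_eq_id, LinearEquiv.conj_id]
      exact Module.End.one_eq_id.symm
    have hconjpow : ∀ k : ℕ, σ ^ k = eqv.conj (τlin ^ k) := by
      intro k
      induction k with
      | zero => rw [pow_zero, pow_zero, hconj_one]
      | succ k ih =>
          rw [pow_succ, pow_succ, ih, hσ, Module.End.mul_eq_comp, Module.End.mul_eq_comp,
            LinearEquiv.conj_comp]
    have hσp : σ ^ p = 1 := by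
      rw [hconjpow p, hτlinp, hconj_one]
    have hσne : σ ≠ 1 := by
      intro hcon
      have hτid : τlin = 1 := by
        apply eqv.conj.injective
        rw [← hσ, hcon, hconj_one]
      have h2 : τlin (Additive.ofMul (⟨a₀, ha₀A⟩ : A)) = Additive.ofMul (⟨a₀, ha₀A⟩ : A) := by
        rw [hτid, Module.End.one_apply]
      have h3 : τf ⟨a₀, ha₀A⟩ = ⟨a₀, ha₀A⟩ := congrArg Additive.toMul h2
      exact ha₀ne (congrArg Subtype.val h3)
    set za : Additive A := Additive.ofMul (⟨z, hzA⟩ : A) with hza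
    set ζ : M := eqv za with hζ
    have hσζ : σ ζ = ζ := by
      rw [hσ, hζ, LinearEquiv.conj_apply]
      simp only [LinearMap.coe_comp, Function.comp_apply, LinearEquiv.coe_coe]
      rw [LinearEquiv.symm_apply_apply]
      congr 1
      have hfix : τf ⟨z, hzA⟩ = ⟨z, hzA⟩ := by
        apply Subtype.ext
        show d * z * d⁻¹ = z
        rw [hz]
        group
      exact congrArg Additive.ofMul hfix
    have hζne : ζ ≠ 0 := by
      intro hcon
      have h0 : za = 0 := by
        apply eqv.injective
        rw [← hζ, hcon, map_zero]
      have h1 : (⟨z, hzA⟩ : A) = 1 := congrArg Additive.toMul h0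
      exact hz1 (congrArg Subtype.val h1)
    obtain ⟨mr, bM⟩ := Submodule.basisOfPid (Pi.basisFun ℤ (Fin n)) M
    have hmr : mr ≤ 2 := by
      have hind : LinearIndependent ℤ (fun i => ((bM i : M) : Fin n → ℤ)) :=
        bM.linearIndependent.map' M.subtype (Submodule.ker_subtype M)
      have hcard := hind.fintype_card_le_finrank
      rw [Module.finrank_pi] at hcard
      simp only [Fintype.card_fin] at hcard
      omega
    set T := LinearMap.toMatrixAlgEquiv bM σ with hT
    have hTp : T ^ p = 1 := by rw [hT, ← map_pow, hσp, map_one]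
    have hTne : T ≠ 1 := by
      intro hcon
      apply hσne
      apply (LinearMap.toMatrixAlgEquiv bM).injective
      rw [← hT, hcon, map_one]
    interval_cases mr
    · -- rank 0 : M is trivial but ζ ≠ 0
      apply hζne
      have h0 : bM.repr ζ = 0 := Subsingleton.elim _ _
      have h2 := congrArg bM.repr.symm h0
      rw [LinearEquiv.symm_apply_apply] at h2
      rw [h2, map_zero]
    · -- rank 1 : determinant argument
      have hdet : T.det ^ p = 1 := by rw [← Matrix.det_pow, hTp, Matrix.det_one]
      have hp0 : p ≠ 0 := hpprime.ne_zero
      have hp1 : p - 1 + 1 = p := Nat.succ_pred_eq_of_pos (Nat.pos_of_ne_zero hp0)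
      have hunit : IsUnit T.det := by
        apply IsUnit.of_mul_eq_one (a := T.det) (T.det ^ (p - 1))
        calc T.det * T.det ^ (p - 1) = T.det ^ (p - 1) * T.det := mul_comm _ _
        _ = T.det ^ (p - 1 + 1) := (pow_succ T.det (p - 1)).symm
        _ = T.det ^ p := by rw [hp1]
        _ = 1 := hdet
      rcases Int.isUnit_iff.1 hunit with h | h
      · apply hTne
        have hd1 : T 0 0 = 1 := by rw [← Matrix.det_fin_one T]; exact h
        apply Matrix.ext
        intro i j
        have hi : i = 0 := Subsingleton.elim i 0
        have hj : j = 0 := Subsingleton.elim j 0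
        subst hi
        subst hj
        rw [hd1, Matrix.one_apply_eq]
      · rw [h, hpodd.neg_one_pow] at hdet
        norm_num at hdet
    · -- rank 2 : the matrix lemma
      set wv : Fin 2 → ℤ := ⇑(bM.repr ζ) with hwv
      have hwv0 : wv ≠ 0 := by
        intro hcon
        apply hζne
        have h0 : bM.repr ζ = 0 := by
          apply Finsupp.ext
          intro x
          have := congrFun hcon x
          simpa using this
        have h2 := congrArg bM.repr.symm h0
        rw [LinearEquiv.symm_apply_apply] at h2
        rw [h2, map_zero]
      have hTw : T.mulVec wv = wv := by
        have h1 := LinearMap.toMatrix_mulVec_repr bM bM σ ζ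
        rw [hσζ] at h1
        exact h1
      exact hTne (matrix_odd_order_fixed hpodd T hTp wv hwv0 hTw)

/-- let `G` be a torsion-free group with no subgroup isomorphic to
the generalized dihedral group, and `H ≤ G` of finite index such that `H` is
conjugacy separable and the centralizer in `H` of every nontrivial element is
free abelian of rank at most `2`.  Then `G` is conjugacy separable. -/
theorem conjSeparable_of_finiteIndex_subgroup (G : Type) [Group G]
    (htf : ∀ g : G, g ≠ 1 → ¬IsOfFinOrder g)
    (hnd : ∀ φ : GenDihedral →* G, ¬ Function.Injective φ)
    (H : Subgroup G) (hfi : H.FiniteIndex)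
    (hcs : ConjSeparable H)
    (hcent : ∀ h : H, h ≠ 1 →
      ∃ n : ℕ, n ≤ 2 ∧
        Nonempty (Subgroup.centralizer ({h} : Set H) ≃* Multiplicative (Fin n → ℤ))) :
    ConjSeparable G := by
  classical
  haveI := hfi
  intro x y hxy
  set N : Subgroup G := H.normalCore with hN
  haveI hNn : N.Normal := Subgroup.normalCore_normal H
  haveI : N.FiniteIndex := Subgroup.finiteIndex_normalCore H
  haveI : Finite (G ⧸ N) := Nat.finite_of_card_ne_zero Subgroup.FiniteIndex.index_ne_zero
  set e : ℕ := Nat.card (G ⧸ N) with he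
  have he0 : e ≠ 0 := Nat.card_pos.ne'
  have hpowN : ∀ g : G, g ^ e ∈ N := by
    intro g
    have h1 : (QuotientGroup.mk' N) (g ^ e) = 1 := by
      rw [map_pow]
      exact pow_card_eq_one'
    exact (QuotientGroup.eq_one_iff _).1 h1
  have hNH : N ≤ H := Subgroup.normalCore_le H
  have hxH : x ^ e ∈ H := hNH (hpowN x)
  -- Step 1 : conjugacy of `e`-th powers implies conjugacy (via abelian centralizers)
  have hstep1 : IsConj (x ^ e) (y ^ e) → IsConj x y := by
    intro hconj
    obtain ⟨g, hg⟩ := isConj_iff.1 hconj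
    set x' : G := g * x * g⁻¹ with hx'
    have hx'e : x' ^ e = y ^ e := by rw [hx', conj_pow, hg]
    by_cases hye : y ^ e = 1
    · have hy1 : y = 1 := tf_pow_eq_one htf he0 hye
      have hx1 : x' = 1 := tf_pow_eq_one htf he0 (by rw [hx'e, hye])
      have hxone : x = 1 := by
        rw [hx'] at hx1
        calc x = g⁻¹ * (g * x * g⁻¹) * g := by group
        _ = 1 := by rw [hx1]; group
      rw [hxone, hy1]
    · set c : G := y ^ e with hc
      have hcH : c ∈ H := hNH (hpowN y)
      have hcne : c ≠ 1 := hye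
      set Dc : Subgroup G := Subgroup.centralizer ({c} : Set G) with hDc
      have hchmem : ∀ u : G, u ∈ Dc ↔ c * u = u * c := by
        intro u
        rw [hDc, Subgroup.mem_centralizer_iff]
        constructor
        · intro h; exact h c rfl
        · intro h h' hh'
          rw [Set.mem_singleton_iff] at hh'
          subst hh'
          exact h
      obtain ⟨n, hn, ⟨ψ₀⟩⟩ := hcent ⟨c, hcH⟩ (fun hcon => hcne (congrArg Subtype.val hcon))
      -- the MulEquiv between the two descriptions of the centralizer of c in H
      set fwd : (H.subgroupOf Dc) → Subgroup.centralizer ({(⟨c, hcH⟩ : H)} : Set H) :=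
        fun u => ⟨⟨((u : Dc) : G), Subgroup.mem_subgroupOf.1 u.2⟩, by
          rw [Subgroup.mem_centralizer_iff]
          intro h hh
          rw [Set.mem_singleton_iff] at hh
          subst hh
          apply Subtype.ext
          rw [Subgroup.coe_mul, Subgroup.coe_mul]
          exact (hchmem _).1 (u : Dc).2⟩ with hfwd
      set bwd : (Subgroup.centralizer ({(⟨c, hcH⟩ : H)} : Set H)) → (H.subgroupOf Dc) :=
        fun w => ⟨⟨((w : H) : G), by
            rw [hchmem]
            have h1 := (Subgroup.mem_centralizer_iff.1 w.2) ⟨c, hcH⟩ rfl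
            have := congrArg Subtype.val h1
            rw [Subgroup.coe_mul, Subgroup.coe_mul] at this
            exact this⟩,
          Subgroup.mem_subgroupOf.2 (w : H).2⟩ with hbwd
      set ψ : (H.subgroupOf Dc) ≃* Multiplicative (Fin n → ℤ) :=
        MulEquiv.trans
          { toFun := fwd
            invFun := bwd
            left_inv := fun u => by
              apply Subtype.ext
              apply Subtype.ext
              rfl
            right_inv := fun w => by
              apply Subtype.ext
              apply Subtype.ext
              rfl
            map_mul' := fun u v => by
              apply Subtype.ext
              apply Subtype.ext
              rfl } ψ₀ with hψ
      have hndD : ∀ φ : GenDihedral →* Dc, ¬ Function.Injective φ := by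
        intro φ hφ
        exact hnd (Dc.subtype.comp φ) ((Subgroup.subtype_injective Dc).comp hφ)
      have hcommDc := comm_of_virtually_free_abelian (tf_subgroup htf Dc) hndD hn
        (H.subgroupOf Dc) (Subgroup.instFiniteIndex_subgroupOf H Dc) ψ
      have hx'Dc : x' ∈ Dc := by
        rw [hchmem, ← hx'e]
        exact ((Commute.refl x').pow_right e).symm.eq
      have hyDc : y ∈ Dc := by
        rw [hchmem, hc]
        exact ((Commute.refl y).pow_right e).symm.eq
      have hcm := hcommDc ⟨x', hx'Dc⟩ ⟨y, hyDc⟩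
      have hcm' : x' * y = y * x' := by
        have := congrArg Subtype.val hcm
        rw [Subgroup.coe_mul, Subgroup.coe_mul] at this
        exact this
      have hxy' : x' = y := by
        have hcxy : Commute x' y := hcm'
        have h1 : (x' * y⁻¹) ^ e = 1 := by
          rw [(hcxy.inv_right).mul_pow, inv_pow, hx'e, mul_inv_cancel]
        have h2 : x' * y⁻¹ = 1 := tf_pow_eq_one htf he0 h1
        exact mul_inv_eq_one.1 h2
      exact isConj_iff.2 ⟨g, by rw [← hx', hxy']⟩
  have hne : ¬ IsConj (x ^ e) (y ^ e) := fun hcon => hxy (hstep1 hcon)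
  -- Step 2 : separation using conjugacy separability of H
  haveI : Finite (G ⧸ H) := Nat.finite_of_card_ne_zero hfi.index_ne_zero
  have key : ∀ s : G ⧸ H, ∃ M : Subgroup G, M.FiniteIndex ∧
      ∀ h : G, h ∈ H →
        (h * x ^ e * h⁻¹)⁻¹ * ((Quotient.out s)⁻¹ * y ^ e * Quotient.out s) ∈ M → False := by
    intro s
    set so : G := Quotient.out s with hso
    have hvsN : so⁻¹ * y ^ e * so ∈ N := by
      have h1 := hNn.conj_mem (y ^ e) (hpowN y) so⁻¹
      simpa using h1
    have hvsH : so⁻¹ * y ^ e * so ∈ H := hNH hvsN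
    have hnc : ¬ IsConj (⟨x ^ e, hxH⟩ : H) (⟨so⁻¹ * y ^ e * so, hvsH⟩ : H) := by
      intro hconj
      obtain ⟨u, hu⟩ := isConj_iff.1 hconj
      have hu' : (u : G) * x ^ e * (u : G)⁻¹ = so⁻¹ * y ^ e * so := by
        have h1 := congrArg Subtype.val hu
        simpa using h1
      apply hne
      apply isConj_iff.2
      refine ⟨so * u, ?_⟩
      calc so * ↑u * x ^ e * (so * ↑u)⁻¹ = so * (↑u * x ^ e * (↑u)⁻¹) * so⁻¹ := by group
      _ = so * (so⁻¹ * y ^ e * so) * so⁻¹ := by rw [hu']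
      _ = y ^ e := by group
    obtain ⟨Q, _, _, φ, hQ⟩ := hcs _ _ hnc
    refine ⟨Subgroup.map H.subtype φ.ker, ?_, ?_⟩
    · constructor
      have hle : Subgroup.map H.subtype φ.ker ≤ H := Subgroup.map_subtype_le _
      rw [← Subgroup.relIndex_mul_index hle]
      apply mul_ne_zero ?_ hfi.index_ne_zero
      have hsub : (Subgroup.map H.subtype φ.ker).subgroupOf H = φ.ker :=
        Subgroup.comap_map_eq_self_of_injective (Subgroup.subtype_injective H) φ.ker
      have hrel : (Subgroup.map H.subtype φ.ker).relIndex H = φ.ker.index := by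
        rw [Subgroup.relIndex, hsub]
      rw [hrel, Subgroup.index_ker]
      exact Nat.card_pos.ne'
    · intro h hh hmem
      have hhx : h * x ^ e * h⁻¹ ∈ H := H.mul_mem (H.mul_mem hh hxH) (H.inv_mem hh)
      set w₁ : H := ⟨h * x ^ e * h⁻¹, hhx⟩ with hw₁
      set w₂ : H := ⟨so⁻¹ * y ^ e * so, hvsH⟩ with hw₂
      have hcoord : ((w₁⁻¹ * w₂ : H) : G)
          = (h * x ^ e * h⁻¹)⁻¹ * (so⁻¹ * y ^ e * so) := rfl
      have hmem' : ((w₁⁻¹ * w₂ : H) : G) ∈ Subgroup.map H.subtype φ.ker := by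
        rw [hcoord]
        exact hmem
      obtain ⟨k, hk, hkeq⟩ := Subgroup.mem_map.1 hmem'
      have hkk : k = w₁⁻¹ * w₂ := (Subgroup.subtype_injective H) hkeq
      rw [hkk] at hk
      have heq : φ w₁ = φ w₂ := by
        have h1 : φ (w₁⁻¹ * w₂) = 1 := hk
        rw [map_mul, map_inv] at h1
        have h2 := inv_mul_eq_one.1 h1
        exact h2
      apply hQ
      apply isConj_iff.2
      refine ⟨φ ⟨h, hh⟩, ?_⟩
      have hw₁' : w₁ = ⟨h, hh⟩ * ⟨x ^ e, hxH⟩ * (⟨h, hh⟩ : H)⁻¹ := by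
        apply Subtype.ext
        rfl
      rw [← map_inv, ← map_mul, ← map_mul, ← hw₁', heq]
  choose Ms hMsfi hMs using key
  haveI : ∀ s : G ⧸ H, (Ms s).FiniteIndex := hMsfi
  set W : Subgroup G := (⨅ s : G ⧸ H, Ms s).normalCore with hW
  haveI hWfi : W.FiniteIndex := by
    haveI : (⨅ s : G ⧸ H, Ms s).FiniteIndex := Subgroup.finiteIndex_iInf hMsfi
    exact Subgroup.finiteIndex_normalCore _
  haveI hWn : W.Normal := Subgroup.normalCore_normal _
  refine ⟨G ⧸ W, inferInstance, Nat.finite_of_card_ne_zero hWfi.index_ne_zero,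
    QuotientGroup.mk' W, ?_⟩
  intro hconj
  obtain ⟨qq, hq⟩ := isConj_iff.1 hconj
  obtain ⟨g, rfl⟩ := QuotientGroup.mk'_surjective W qq
  have hq' : (QuotientGroup.mk' W) (g * x * g⁻¹) = QuotientGroup.mk' W y := by
    rw [map_mul, map_mul, map_inv]
    exact hq
  have hqe : (QuotientGroup.mk' W) (g * x ^ e * g⁻¹) = QuotientGroup.mk' W (y ^ e) := by
    have h1 : g * x ^ e * g⁻¹ = (g * x * g⁻¹) ^ e := conj_pow.symm
    rw [h1, map_pow, map_pow, hq']
  have hmemW : (g * x ^ e * g⁻¹)⁻¹ * y ^ e ∈ W := QuotientGroup.eq.1 hqe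
  set s : G ⧸ H := QuotientGroup.mk g with hs
  set so : G := Quotient.out s with hso
  have hsoq : (QuotientGroup.mk so : G ⧸ H) = QuotientGroup.mk g := by
    rw [hso, hs]
    exact QuotientGroup.out_eq' s
  have hsog : so⁻¹ * g ∈ H := QuotientGroup.eq.1 hsoq
  have hgsoh : g = so * (so⁻¹ * g) := by group
  have hfinal : ((so⁻¹ * g) * x ^ e * (so⁻¹ * g)⁻¹)⁻¹ * (so⁻¹ * y ^ e * so) ∈ Ms s := by
    have hWle : W ≤ Ms s := le_trans (Subgroup.normalCore_le _) (iInf_le _ s)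
    have hconjW : so⁻¹ * ((g * x ^ e * g⁻¹)⁻¹ * y ^ e) * so ∈ W := by
      have h1 := hWn.conj_mem _ hmemW so⁻¹
      simpa using h1
    have heq2 : so⁻¹ * ((g * x ^ e * g⁻¹)⁻¹ * y ^ e) * so
        = ((so⁻¹ * g) * x ^ e * (so⁻¹ * g)⁻¹)⁻¹ * (so⁻¹ * y ^ e * so) := by
      group
    rw [heq2] at hconjW
    exact hWle hconjW
  exact hMs s (so⁻¹ * g) hsog hfinal
end

section
/- Let K be a torsion-free group with nontrivial center that contains a finite-index subgroup isomorphic to ℤ × ℤ. If K does not contain a subgroup isomorphic to the generalized dihedral group ⟨x, y ∣ x² = y²⟩, then K is abelian. -/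
open scoped commutatorElement
open scoped IsMulCommutative

/-- Any three vectors in `ℤ × ℤ` admit a nontrivial integral relation. -/
lemma dep3 (v₁ v₂ v₃ : ℤ × ℤ) :
    ∃ α β γ : ℤ, ¬(α = 0 ∧ β = 0 ∧ γ = 0) ∧ α • v₁ + β • v₂ + γ • v₃ = 0 := by
  obtain ⟨a, b⟩ := v₁; obtain ⟨c, d⟩ := v₂; obtain ⟨e, f⟩ := v₃
  by_cases hδ : a * d - b * c = 0
  · by_cases ha : a = 0
    · by_cases hb : b = 0
      · exact ⟨1, 0, 0, by simp, by simp [ha, hb, Prod.ext_iff]⟩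
      · refine ⟨d, -b, 0, fun h => hb (by simpa using h.2.1), ?_⟩
        simp only [Prod.smul_mk, smul_eq_mul, Prod.mk_add_mk, zero_smul, add_zero, Prod.mk_eq_zero]
        constructor <;> nlinarith
    · refine ⟨c, -a, 0, fun h => ha (by simpa using h.2.1), ?_⟩
      simp only [Prod.smul_mk, smul_eq_mul, Prod.mk_add_mk, zero_smul, add_zero, Prod.mk_eq_zero]
      constructor <;> nlinarith
  · refine ⟨e * d - f * c, a * f - b * e, -(a * d - b * c), fun h => hδ (by linarith [h.2.2]), ?_⟩
    simp only [Prod.smul_mk, smul_eq_mul, Prod.mk_add_mk, Prod.mk_eq_zero]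
    constructor <;> ring

/-- In a torsion-free group, a nontrivial element has no nontrivial power equal to one. -/
lemma tf_zpow {K : Type*} [Group K] (htf : ∀ g : K, g ≠ 1 → ¬IsOfFinOrder g) {x : K} (hx : x ≠ 1)
    {n : ℤ} (h : x ^ n = 1) : n = 0 := by
  by_contra hn
  refine htf x hx (isOfFinOrder_iff_pow_eq_one.mpr ⟨n.natAbs, Int.natAbs_pos.mpr hn, ?_⟩)
  rcases Int.natAbs_eq n with h' | h'
  · rw [← zpow_natCast, ← h', h]
  · rw [← zpow_natCast, ← neg_neg (n.natAbs : ℤ), ← h', zpow_neg, h, inv_one]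

/-- cancel exponents in torsion-free groups -/
lemma tf_zpow_right_cancel {K : Type*} [Group K] (htf : ∀ g : K, g ≠ 1 → ¬IsOfFinOrder g) {x : K}
    (hx : x ≠ 1) {m n : ℤ} (h : x ^ m = x ^ n) : m = n := by
  have : x ^ (m - n) = 1 := by rw [zpow_sub, h, mul_inv_cancel]
  have := tf_zpow htf hx this; omega

namespace GDaux

def X : GenDihedral := PresentedGroup.of true
def Y : GenDihedral := PresentedGroup.of false
def B : GenDihedral := X * Y⁻¹

lemma sq_eq : X ^ 2 = Y ^ 2 := by
  have h : (X ^ 2 * (Y ^ 2)⁻¹ : GenDihedral) = 1 := by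
    have : (X ^ 2 * (Y ^ 2)⁻¹ : GenDihedral) =
        QuotientGroup.mk (FreeGroup.of true ^ 2 * (FreeGroup.of false ^ 2)⁻¹) := rfl
    rw [this]
    exact (QuotientGroup.eq_one_iff _).mpr (Subgroup.subset_normalClosure rfl)
  exact mul_inv_eq_one.mp h

lemma mul_self_eq : X * X = Y * Y := by
  rw [← pow_two, ← pow_two]; exact sq_eq

lemma conj_B : X * B * X⁻¹ = B⁻¹ := by
  show X * (X * Y⁻¹) * X⁻¹ = (X * Y⁻¹)⁻¹
  rw [mul_inv_rev, inv_inv, ← mul_assoc, mul_self_eq]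
  group

lemma Y_eq : Y = X * B := by
  show Y = X * (X * Y⁻¹)
  rw [← mul_assoc, mul_self_eq]; group

lemma conjn_B (n : ℤ) : X ^ n * B * X ^ (-n) = B ∨ X ^ n * B * X ^ (-n) = B⁻¹ := by
  have key : ∀ m : ℕ, (X ^ (m:ℤ) * B * X ^ (-(m:ℤ)) = B ∨ X ^ (m:ℤ) * B * X ^ (-(m:ℤ)) = B⁻¹)
      ∧ (X ^ (-(m:ℤ)) * B * X ^ (m:ℤ) = B ∨ X ^ (-(m:ℤ)) * B * X ^ (m:ℤ) = B⁻¹) := by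
    intro m
    induction m with
    | zero => simp
    | succ i ih =>
      obtain ⟨ih1, ih2⟩ := ih
      constructor
      · have e : X ^ ((i:ℤ)+1) * B * X ^ (-((i:ℤ)+1)) =
            X ^ (i:ℤ) * (X * B * X⁻¹) * X ^ (-(i:ℤ)) := by group
        push_cast
        rw [e, conj_B]
        have e2 : X ^ (i:ℤ) * B⁻¹ * X ^ (-(i:ℤ)) = (X ^ (i:ℤ) * B * X ^ (-(i:ℤ)))⁻¹ := by group
        rcases ih1 with h | h
        · right; rw [e2, h]
        · left; rw [e2, h, inv_inv]
      · have hX : X⁻¹ * B * X = B⁻¹ := by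
          have h1 : X⁻¹ * B⁻¹ * X = B := by rw [← conj_B]; group
          calc X⁻¹ * B * X = (X⁻¹ * B⁻¹ * X)⁻¹ := by group
            _ = B⁻¹ := by rw [h1]
        have e : X ^ (-((i:ℤ)+1)) * B * X ^ ((i:ℤ)+1) =
            X ^ (-(i:ℤ)) * (X⁻¹ * B * X) * X ^ (i:ℤ) := by group
        push_cast
        rw [e, hX]
        have e2 : X ^ (-(i:ℤ)) * B⁻¹ * X ^ (i:ℤ) = (X ^ (-(i:ℤ)) * B * X ^ (i:ℤ))⁻¹ := by group
        rcases ih2 with h | h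
        · right; rw [e2, h]
        · left; rw [e2, h, inv_inv]
  rcases Int.natAbs_eq n with h | h
  · rw [h]; exact (key n.natAbs).1
  · rw [h, neg_neg]; exact (key n.natAbs).2

lemma conjn_Bm (n m : ℤ) :
    X ^ n * B ^ m * X ^ (-n) = B ^ m ∨ X ^ n * B ^ m * X ^ (-n) = B ^ (-m) := by
  have hmap : X ^ n * B ^ m * X ^ (-n) = (X ^ n * B * X ^ (-n)) ^ m := by
    rw [zpow_neg]
    calc X ^ n * B ^ m * (X ^ n)⁻¹ = MulAut.conj (X ^ n) (B ^ m) := by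
          rw [MulAut.conj_apply]
      _ = (MulAut.conj (X ^ n) B) ^ m := map_zpow _ _ _
      _ = (X ^ n * B * (X ^ n)⁻¹) ^ m := by rw [MulAut.conj_apply]
  rcases conjn_B n with h | h
  · left; rw [hmap, h]
  · right; rw [hmap, h, inv_zpow, ← zpow_neg]

/-- swap `B` powers past `X` powers -/
lemma swap (m k : ℤ) : ∃ m' : ℤ, (m' = m ∨ m' = -m) ∧ B ^ m * X ^ k = X ^ k * B ^ m' := by
  rcases conjn_Bm (-k) m with h | h <;> rw [neg_neg] at h
  · refine ⟨m, Or.inl rfl, ?_⟩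
    have h2 := congrArg (fun t => X ^ k * t) h
    rw [show X ^ k * (X ^ (-k) * B ^ m * X ^ k) = B ^ m * X ^ k by group] at h2
    exact h2
  · refine ⟨-m, Or.inr rfl, ?_⟩
    have h2 := congrArg (fun t => X ^ k * t) h
    rw [show X ^ k * (X ^ (-k) * B ^ m * X ^ k) = B ^ m * X ^ k by group] at h2
    exact h2

lemma all_form (p : GenDihedral) : ∃ n m : ℤ, p = X ^ n * B ^ m := by
  let T : Subgroup GenDihedral :=
    { carrier := {p | ∃ n m : ℤ, p = X ^ n * B ^ m}
      one_mem' := ⟨0, 0, by simp⟩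
      mul_mem' := by
        rintro p q ⟨n, m, rfl⟩ ⟨k, l, rfl⟩
        obtain ⟨m', _, hs⟩ := swap m k
        refine ⟨n + k, m' + l, ?_⟩
        rw [zpow_add, zpow_add]
        calc X ^ n * B ^ m * (X ^ k * B ^ l) = X ^ n * (B ^ m * X ^ k) * B ^ l := by group
          _ = X ^ n * (X ^ k * B ^ m') * B ^ l := by rw [hs]
          _ = X ^ n * X ^ k * (B ^ m' * B ^ l) := by group
      inv_mem' := by
        rintro p ⟨n, m, rfl⟩
        obtain ⟨m', _, hs⟩ := swap (-m) (-n)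
        refine ⟨-n, m', ?_⟩
        calc (X ^ n * B ^ m)⁻¹ = B ^ (-m) * X ^ (-n) := by group
          _ = X ^ (-n) * B ^ m' := hs }
  have hT : ∀ q : GenDihedral, q ∈ T := by
    have htop : (⊤ : Subgroup GenDihedral) ≤ T := by
      rw [← PresentedGroup.closure_range_of]
      refine Subgroup.closure_le T |>.mpr ?_
      rintro _ ⟨b, rfl⟩
      cases b
      · exact ⟨1, 1, by rw [zpow_one, zpow_one]; exact Y_eq⟩
      · exact ⟨1, 0, by simp [X]⟩
    exact fun q => htop (Subgroup.mem_top q)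
  exact hT p

end GDaux

open GDaux in
/-- If `K` is torsion-free and contains `g, b` with `b ≠ 1` and `g b g⁻¹ = b⁻¹`,
then `GenDihedral` embeds into `K`. -/
lemma exists_genDihedral_embedding {K : Type*} [Group K] (htf : ∀ g : K, g ≠ 1 → ¬IsOfFinOrder g)
    {g b : K} (hb : b ≠ 1) (hrel : g * b * g⁻¹ = b⁻¹) :
    ∃ φ : GenDihedral →* K, Function.Injective φ := by
  have hg : g ≠ 1 := by
    rintro rfl
    rw [one_mul, inv_one, mul_one] at hrel
    have h2 : b ^ 2 = 1 := by rw [pow_two]; nth_rewrite 1 [hrel]; rw [inv_mul_cancel]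
    exact hb (htf b hb (isOfFinOrder_iff_pow_eq_one.mpr ⟨2, two_pos, h2⟩)).elim
  have h2 : g * b⁻¹ * g⁻¹ = b := by
    rw [show g * b⁻¹ * g⁻¹ = (g * b * g⁻¹)⁻¹ by group, hrel, inv_inv]
  have hgbinv : g * b⁻¹ = b * g := by
    have := congrArg (· * g) h2
    rw [← this]; group
  have hx : g * b = b⁻¹ * g := by rw [← hrel]; group
  have hgb2 : (g * b) * (g * b) = g * g := by
    rw [hx]
    calc (b⁻¹ * g) * (b⁻¹ * g) = b⁻¹ * (g * b⁻¹) * g := by group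
      _ = b⁻¹ * (b * g) * g := by rw [hgbinv]
      _ = g * g := by group
  set f : Bool → K := fun t => if t then g else g * b with hf
  have hrels : ∀ r ∈ ({FreeGroup.of true ^ 2 * (FreeGroup.of false ^ 2)⁻¹} :
      Set (FreeGroup Bool)), FreeGroup.lift f r = 1 := by
    intro r hr
    rw [Set.mem_singleton_iff] at hr
    subst hr
    rw [map_mul, map_inv, map_pow, map_pow, FreeGroup.lift_apply_of, FreeGroup.lift_apply_of]
    have hft : f true = g := rfl
    have hff : f false = g * b := rfl
    rw [hft, hff, pow_two, pow_two, hgb2, mul_inv_cancel]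
  refine ⟨PresentedGroup.toGroup hrels, (injective_iff_map_eq_one _).mpr ?_⟩
  set φ := PresentedGroup.toGroup hrels with hφ
  have hφX : φ X = g := PresentedGroup.toGroup.of hrels
  have hφY : φ Y = g * b := PresentedGroup.toGroup.of hrels
  have hφB : φ B = b := by
    rw [show B = X * Y⁻¹ from rfl, map_mul, map_inv, hφX, hφY]
    rw [show g * (g * b)⁻¹ = g * b⁻¹ * g⁻¹ by group, h2]
  intro p hp
  obtain ⟨n, m, rfl⟩ := all_form p
  rw [map_mul, map_zpow, map_zpow, hφX, hφB] at hp
  have hgn : g ^ n = (b ^ m)⁻¹ := eq_inv_of_mul_eq_one_left hp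
  have hconj : g * (b ^ m) * g⁻¹ = (b ^ m)⁻¹ := by
    calc g * b ^ m * g⁻¹ = MulAut.conj g (b ^ m) := by rw [MulAut.conj_apply]
      _ = (MulAut.conj g b) ^ m := map_zpow _ _ _
      _ = (b⁻¹) ^ m := by rw [MulAut.conj_apply, hrel]
      _ = (b ^ m)⁻¹ := inv_zpow _ _
  have hfix : g * (b ^ m)⁻¹ * g⁻¹ = (b ^ m)⁻¹ := by rw [← hgn]; group
  have hfix2 : g * b ^ m * g⁻¹ = b ^ m := by
    calc g * b ^ m * g⁻¹ = (g * (b ^ m)⁻¹ * g⁻¹)⁻¹ := by group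
      _ = ((b ^ m)⁻¹)⁻¹ := by rw [hfix]
      _ = b ^ m := inv_inv _
  have hbm : b ^ m = (b ^ m)⁻¹ := hfix2.symm.trans hconj
  have h2m : b ^ (2 * m) = 1 := by
    rw [two_mul, zpow_add]
    nth_rewrite 1 [hbm]
    rw [inv_mul_cancel]
  have hm : m = 0 := by have := tf_zpow htf hb h2m; omega
  subst hm
  rw [zpow_zero, mul_one] at hp ⊢
  have hn : n = 0 := tf_zpow htf hg hp
  subst hn
  exact zpow_zero X

/-- commutators ignore central factors -/
lemma comm_drop {G : Type*} [Group G] (a b z w : G) (hz : ∀ t, Commute z t)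
    (hw : ∀ t, Commute w t) : ⁅a * z, b * w⁆ = ⁅a, b⁆ := by
  rw [commutatorElement_def, commutatorElement_def]
  calc (a * z) * (b * w) * (a * z)⁻¹ * (b * w)⁻¹
      = a * (z * (b * w)) * (z⁻¹ * a⁻¹) * (w⁻¹ * b⁻¹) := by group
    _ = a * ((b * w) * z) * (z⁻¹ * a⁻¹) * (w⁻¹ * b⁻¹) := by rw [(hz (b * w)).eq]
    _ = a * b * (w * a⁻¹) * (w⁻¹ * b⁻¹) := by group
    _ = a * b * (a⁻¹ * w) * (w⁻¹ * b⁻¹) := by rw [(hw a⁻¹).eq]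
    _ = a * b * a⁻¹ * b⁻¹ := by group

/-- a torsion-free group with nontrivial center containing
`ℤ × ℤ` as a finite-index subgroup and containing no generalized dihedral
subgroup is abelian. -/
theorem abelian_of_virtually_Z2 (K : Type) [Group K]
    (htf : ∀ g : K, g ≠ 1 → ¬IsOfFinOrder g)
    (hz : Subgroup.center K ≠ ⊥)
    (hfi : ∃ A : Subgroup K, A.FiniteIndex ∧ Nonempty (A ≃* Multiplicative (ℤ × ℤ)))
    (hnd : ∀ φ : GenDihedral →* K, ¬ Function.Injective φ) :
    ∀ x y : K, x * y = y * x := by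
  obtain ⟨A, hfiA, ⟨e⟩⟩ := hfi
  haveI := hfiA
  have hAcomm : ∀ x y : K, x ∈ A → y ∈ A → x * y = y * x := by
    intro x y hx hy
    have h : (⟨x, hx⟩ : A) * ⟨y, hy⟩ = ⟨y, hy⟩ * ⟨x, hx⟩ :=
      e.injective (by rw [map_mul, map_mul, mul_comm])
    exact congrArg Subtype.val h
  set N := A.normalCore with hNdef
  haveI hNnorm : N.Normal := Subgroup.normalCore_normal A
  haveI hNfi : N.FiniteIndex := A.finiteIndex_normalCore
  have hNA : N ≤ A := A.normalCore_le
  have hNcomm : ∀ x y : K, x ∈ N → y ∈ N → x * y = y * x :=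
    fun x y hx hy => hAcomm x y (hNA hx) (hNA hy)
  haveI : IsMulCommutative N := ⟨⟨fun a b => Subtype.ext (hNcomm a b a.2 b.2)⟩⟩
  -- any three elements of `N` satisfy a nontrivial relation
  have hdep : ∀ x y w : ↥N, ∃ α β γ : ℤ, ¬(α = 0 ∧ β = 0 ∧ γ = 0) ∧
      x ^ α * y ^ β * w ^ γ = 1 := by
    intro x y w
    set x' : ↥A := ⟨(x : K), hNA x.2⟩ with hx'
    set y' : ↥A := ⟨(y : K), hNA y.2⟩ with hy'
    set w' : ↥A := ⟨(w : K), hNA w.2⟩ with hw'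
    obtain ⟨α, β, γ, hne, hrel⟩ := dep3 (e x').toAdd (e y').toAdd (e w').toAdd
    refine ⟨α, β, γ, hne, ?_⟩
    have hA : x' ^ α * y' ^ β * w' ^ γ = 1 := by
      apply e.injective
      rw [map_mul, map_mul, map_zpow, map_zpow, map_zpow, map_one]
      apply Multiplicative.toAdd.injective
      rw [toAdd_mul, toAdd_mul, toAdd_zpow, toAdd_zpow, toAdd_zpow, toAdd_one]
      exact hrel
    have hAK : (x : K) ^ α * (y : K) ^ β * (w : K) ^ γ = 1 := by
      have h := congrArg Subtype.val hA
      simpa using h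
    apply Subtype.ext
    simpa using hAK
  -- torsion-freeness inside N
  have tfN : ∀ (t : ↥N), t ≠ 1 → ∀ α : ℤ, t ^ α = 1 → α = 0 := by
    intro t ht α hα
    refine tf_zpow htf (x := (t : K)) (fun h => ht (Subtype.ext h)) ?_
    have := congrArg Subtype.val hα
    simpa using this
  -- KEY CLAIM : N is central
  have key : ∀ (g x : K), x ∈ N → g * x * g⁻¹ = x := by
    by_contra hcon
    push_neg at hcon
    obtain ⟨g, x₀, hx₀N, hgx₀⟩ := hcon
    have hg1 : g ≠ 1 := by rintro rfl; exact hgx₀ (by group)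
    set k := N.index with hk
    have hk0 : k ≠ 0 := hNfi.index_ne_zero
    have hgk : g ^ k ∈ N := N.pow_index_mem g
    have hconjmem : ∀ (i : ℕ) (x : ↥N), g ^ i * (x : K) * (g ^ i)⁻¹ ∈ N :=
      fun i x => hNnorm.conj_mem _ x.2 _
    set cj : ℕ → ↥N → ↥N := fun i x => ⟨g ^ i * (x : K) * (g ^ i)⁻¹, hconjmem i x⟩ with hcjdef
    have cj_coe : ∀ i x, (cj i x : K) = g ^ i * (x : K) * (g ^ i)⁻¹ := fun _ _ => rfl
    have cj_mul : ∀ i x y, cj i (x * y) = cj i x * cj i y := by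
      intro i x y
      apply Subtype.ext
      rw [Subgroup.coe_mul, cj_coe, cj_coe, cj_coe, Subgroup.coe_mul]
      group
    set cjh : ℕ → (↥N →* ↥N) := fun i => MonoidHom.mk' (cj i) (cj_mul i) with hcjh
    have cjh_apply : ∀ i x, cjh i x = cj i x := fun _ _ => rfl
    have cj_zero : ∀ x, cj 0 x = x := by
      intro x; apply Subtype.ext; rw [cj_coe]; group
    have cj_k : ∀ x : ↥N, cj k x = x := by
      intro x
      apply Subtype.ext
      rw [cj_coe]
      rw [hNcomm _ _ hgk x.2]
      group
    have cj_zpow : ∀ (i : ℕ) (x : ↥N) (α : ℤ), cj i (x ^ α) = (cj i x) ^ α :=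
      fun i x α => map_zpow (cjh i) x α
    have cj_add : ∀ (i : ℕ) (x : ↥N), cj (i + 1) x = cj i (cj 1 x) := by
      intro i x
      apply Subtype.ext
      rw [cj_coe, cj_coe, cj_coe, pow_succ, pow_one]
      group
    set ν : ↥N → ↥N := fun x => ∏ i ∈ Finset.range k, cj i x with hνdef
    have ν_mul : ∀ x y, ν (x * y) = ν x * ν y := by
      intro x y
      simp only [hνdef, cj_mul]
      exact Finset.prod_mul_distrib
    set νh : ↥N →* ↥N := MonoidHom.mk' ν ν_mul with hνh
    have νh_apply : ∀ x, νh x = ν x := fun _ => rfl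
    have ν_shift : ∀ x, ν (cj 1 x) = ν x := by
      intro x
      have h1 : ν (cj 1 x) = ∏ i ∈ Finset.range k, cj (i + 1) x :=
        Finset.prod_congr rfl (fun i _ => (cj_add i x).symm)
      have h2 : (∏ i ∈ Finset.range (k + 1), cj i x)
          = (∏ i ∈ Finset.range k, cj (i + 1) x) * cj 0 x := Finset.prod_range_succ' _ _
      have h3 : (∏ i ∈ Finset.range (k + 1), cj i x)
          = (∏ i ∈ Finset.range k, cj i x) * cj k x := Finset.prod_range_succ _ _
      have h4 : (∏ i ∈ Finset.range k, cj (i + 1) x) * cj 0 x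
          = (∏ i ∈ Finset.range k, cj i x) * cj k x := by rw [← h2, h3]
      rw [cj_zero, cj_k] at h4
      rw [h1]
      exact mul_right_cancel h4
    set c : ↥N := ⟨g ^ k, hgk⟩ with hcdef
    have hc1 : c ≠ 1 := by
      intro h
      have hco : g ^ k = 1 := congrArg Subtype.val h
      exact absurd (isOfFinOrder_iff_pow_eq_one.mpr ⟨k, Nat.pos_of_ne_zero hk0, hco⟩)
        (htf g hg1)
    have cj_c : ∀ i, cj i c = c := by
      intro i
      apply Subtype.ext
      rw [cj_coe]
      have hgg : g ^ i * g ^ k = g ^ k * g ^ i := by rw [← pow_add, ← pow_add, add_comm]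
      rw [show (c : K) = g ^ k from rfl, hgg]
      group
    have ν_c : ν c = c ^ k := by
      simp only [hνdef]
      rw [Finset.prod_congr rfl (fun i _ => cj_c i), Finset.prod_const, Finset.card_range]
    set x₀' : ↥N := ⟨x₀, hx₀N⟩ with hx₀'
    set u : ↥N := x₀' * (cj 1 x₀')⁻¹ with hu
    have hu1 : u ≠ 1 := by
      intro h
      rw [hu, mul_inv_eq_one] at h
      apply hgx₀
      have h2 := congrArg Subtype.val h
      rw [cj_coe, pow_one] at h2
      exact h2.symm
    have νu : ν u = 1 := by
      have h1 : νh u = νh x₀' * (νh (cj 1 x₀'))⁻¹ := by rw [hu, map_mul, map_inv]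
      rw [νh_apply, νh_apply, νh_apply, ν_shift, mul_inv_cancel] at h1
      exact h1
    -- independence of u and c
    have hind : ∀ α β : ℤ, u ^ α * c ^ β = 1 → α = 0 ∧ β = 0 := by
      intro α β hr
      have h1 : νh (u ^ α * c ^ β) = 1 := by rw [hr, map_one]
      rw [map_mul, map_zpow, map_zpow, νh_apply, νh_apply, νu, ν_c, one_zpow, one_mul,
        ← zpow_natCast c k, ← zpow_mul] at h1
      have hβ : β = 0 := by
        have := tfN c hc1 _ h1
        have hk0' : (k : ℤ) ≠ 0 := Int.natCast_ne_zero.mpr hk0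
        exact by
          rcases mul_eq_zero.mp this with h | h
          · exact absurd h hk0'
          · exact h
      subst hβ
      rw [zpow_zero, mul_one] at hr
      exact ⟨tfN u hu1 _ hr, rfl⟩
    obtain ⟨α, β, γ, hne, hrel3⟩ := hdep (cj 1 u) u c
    have hγ : γ = 0 := by
      have h1 : νh ((cj 1 u) ^ α * u ^ β * c ^ γ) = 1 := by rw [hrel3, map_one]
      rw [map_mul, map_mul, map_zpow, map_zpow, map_zpow, νh_apply, νh_apply, νh_apply,
        ν_shift, νu, ν_c, one_zpow, one_zpow, one_mul, one_mul,
        ← zpow_natCast c k, ← zpow_mul] at h1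
      have := tfN c hc1 _ h1
      have hk0' : (k : ℤ) ≠ 0 := Int.natCast_ne_zero.mpr hk0
      rcases mul_eq_zero.mp this with h | h
      · exact absurd h hk0'
      · exact h
    subst hγ
    rw [zpow_zero, mul_one] at hrel3
    have hα0 : α ≠ 0 := by
      intro h
      subst h
      rw [zpow_zero, one_mul] at hrel3
      have : β = 0 := tfN u hu1 _ hrel3
      exact hne ⟨rfl, this, rfl⟩
    set δ : ℤ := -β with hδdef
    have hbase : (cj 1 u) ^ α = u ^ δ := by
      rw [hδdef, zpow_neg]
      exact eq_inv_of_mul_eq_one_left hrel3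
    have hiter : ∀ i : ℕ, (cj i u) ^ (α ^ i) = u ^ (δ ^ i) := by
      intro i
      induction i with
      | zero => simp [cj_zero]
      | succ i ih =>
        calc (cj (i + 1) u) ^ α ^ (i + 1)
            = ((cj i (cj 1 u)) ^ α) ^ α ^ i := by
              rw [cj_add, pow_succ', zpow_mul]
          _ = (cj i ((cj 1 u) ^ α)) ^ α ^ i := by rw [cj_zpow]
          _ = (cj i (u ^ δ)) ^ α ^ i := by rw [hbase]
          _ = ((cj i u) ^ δ) ^ α ^ i := by rw [cj_zpow]
          _ = ((cj i u) ^ (α ^ i)) ^ δ := by rw [← zpow_mul, mul_comm, zpow_mul]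
          _ = (u ^ δ ^ i) ^ δ := by rw [ih]
          _ = u ^ δ ^ (i + 1) := by rw [← zpow_mul, ← pow_succ]
    have hk_eq : u ^ (α ^ k : ℤ) = u ^ (δ ^ k : ℤ) := by
      have h := hiter k
      rwa [cj_k] at h
    have hexp : (α : ℤ) ^ k = δ ^ k := by
      have h0 : u ^ ((α ^ k : ℤ) - δ ^ k) = 1 := by rw [zpow_sub, hk_eq, mul_inv_cancel]
      have := tfN u hu1 _ h0
      omega
    have habs : δ = α ∨ δ = -α := by
      have h1 : α.natAbs ^ k = δ.natAbs ^ k := by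
        have h := congrArg Int.natAbs hexp
        rwa [Int.natAbs_pow, Int.natAbs_pow] at h
      have h2 : α.natAbs = δ.natAbs :=
        Nat.pow_left_injective hk0 h1
      rcases Int.natAbs_eq_natAbs_iff.mp h2 with h | h
      · exact Or.inl h.symm
      · right; omega
    have cancel_exp : ∀ s t : ↥N, s ^ α = t ^ α → s = t := by
      intro s t hst
      have hq : (s * t⁻¹) ^ α = 1 := by
        rw [mul_zpow, hst, inv_zpow, mul_inv_cancel]
      by_cases hq1 : s * t⁻¹ = 1
      · rwa [mul_inv_eq_one] at hq1
      · exact absurd (tfN _ hq1 _ hq) hα0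
    rcases habs with hδα | hδα
    · -- fixed case : contradiction with σ nontrivial
      have hfix : cj 1 u = u := by
        apply cancel_exp
        rw [hbase, hδα]
      obtain ⟨a, b, d, hne2, hrel2⟩ := hdep x₀' u c
      have ha0 : a ≠ 0 := by
        intro h
        subst h
        rw [zpow_zero, one_mul] at hrel2
        obtain ⟨hb, hd⟩ := hind _ _ hrel2
        exact hne2 ⟨rfl, hb, hd⟩
      have happ : (cj 1 x₀') ^ a * u ^ b * c ^ d = 1 := by
        have h := congrArg (cjh 1) hrel2
        rw [map_mul, map_mul, map_zpow, map_zpow, map_zpow, map_one,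
          cjh_apply, cjh_apply, cjh_apply, hfix, cj_c] at h
        exact h
      have heq : (cj 1 x₀') ^ a = x₀' ^ a := by
        have h1 : (cj 1 x₀') ^ a = (u ^ b * c ^ d)⁻¹ := by
          apply eq_inv_of_mul_eq_one_left
          rw [← mul_assoc]
          exact happ
        have h2 : x₀' ^ a = (u ^ b * c ^ d)⁻¹ := by
          apply eq_inv_of_mul_eq_one_left
          rw [← mul_assoc]
          exact hrel2
        rw [h1, h2]
      have hfix0 : cj 1 x₀' = x₀' := by
        have hq : ((cj 1 x₀') * x₀'⁻¹) ^ a = 1 := by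
          rw [mul_zpow, heq, inv_zpow, mul_inv_cancel]
        by_cases hq1 : (cj 1 x₀') * x₀'⁻¹ = 1
        · rwa [mul_inv_eq_one] at hq1
        · exact absurd (tfN _ hq1 _ hq) ha0
      apply hgx₀
      have h2 := congrArg Subtype.val hfix0
      rw [cj_coe, pow_one] at h2
      exact h2
    · -- anti-fixed case : GenDihedral embeds
      have hanti : cj 1 u = u⁻¹ := by
        apply cancel_exp
        rw [hbase, hδα, inv_zpow, ← zpow_neg]
      have hbK : g * (u : K) * g⁻¹ = (u : K)⁻¹ := by
        have h2 := congrArg Subtype.val hanti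
        rw [cj_coe, pow_one] at h2
        simpa using h2
      have huK : (u : K) ≠ 1 := fun h => hu1 (Subtype.ext h)
      obtain ⟨φ, hφ⟩ := exists_genDihedral_embedding htf huK hbK
      exact hnd φ hφ
  -- PART II : Schur's argument
  have hNZ : N ≤ Subgroup.center K := by
    intro x hx
    rw [Subgroup.mem_center_iff]
    intro g
    have h := key g x hx
    calc g * x = g * x * g⁻¹ * g := by group
      _ = x * g := by rw [h]
  haveI hZfi : (Subgroup.center K).FiniteIndex := Subgroup.finiteIndex_of_le hNZ
  haveI hQfin : Finite (K ⧸ Subgroup.center K) := by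
    apply Nat.finite_of_card_ne_zero
    have h := hZfi.index_ne_zero
    rwa [Subgroup.index] at h
  have hsub : commutatorSet K ⊆ Set.range
      (fun p : (K ⧸ Subgroup.center K) × (K ⧸ Subgroup.center K) =>
        ⁅(Quotient.out p.1 : K), (Quotient.out p.2 : K)⁆) := by
    rintro _ ⟨g, h, rfl⟩
    refine ⟨((g : K ⧸ Subgroup.center K), (h : K ⧸ Subgroup.center K)), ?_⟩
    simp only
    set g' : K := Quotient.out (g : K ⧸ Subgroup.center K) with hg'
    set h' : K := Quotient.out (h : K ⧸ Subgroup.center K) with hh'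
    have hgq : (g' : K ⧸ Subgroup.center K) = (g : K ⧸ Subgroup.center K) :=
      Quotient.out_eq _
    have hhq : (h' : K ⧸ Subgroup.center K) = (h : K ⧸ Subgroup.center K) :=
      Quotient.out_eq _
    have hzg : g'⁻¹ * g ∈ Subgroup.center K := (QuotientGroup.eq).mp hgq
    have hzh : h'⁻¹ * h ∈ Subgroup.center K := (QuotientGroup.eq).mp hhq
    have hcz : ∀ t, Commute (g'⁻¹ * g) t :=
      fun t => ((Subgroup.mem_center_iff.mp hzg) t).symm
    have hcw : ∀ t, Commute (h'⁻¹ * h) t :=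
      fun t => ((Subgroup.mem_center_iff.mp hzh) t).symm
    calc ⁅g', h'⁆ = ⁅g' * (g'⁻¹ * g), h' * (h'⁻¹ * h)⁆ := (comm_drop _ _ _ _ hcz hcw).symm
      _ = ⁅g, h⁆ := by rw [show g' * (g'⁻¹ * g) = g by group, show h' * (h'⁻¹ * h) = h by group]
  have hfinset : (commutatorSet K).Finite := (Set.finite_range _).subset hsub
  haveI : Finite (commutatorSet K) := hfinset
  haveI hfc : Finite (commutator K) := inferInstance
  intro x y
  have hmem : ⁅x, y⁆ ∈ commutator K :=
    Subgroup.commutator_mem_commutator (Subgroup.mem_top x) (Subgroup.mem_top y)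
  set t : ↥(commutator K) := ⟨⁅x, y⁆, hmem⟩ with ht
  have htpow : t ^ Nat.card ↥(commutator K) = 1 := pow_card_eq_one'
  have hcard : Nat.card ↥(commutator K) ≠ 0 := Nat.card_pos.ne'
  have htK : ⁅x, y⁆ ^ Nat.card ↥(commutator K) = 1 := by
    have h := congrArg Subtype.val htpow
    simpa only [SubmonoidClass.coe_pow, OneMemClass.coe_one] using h
  by_cases h1 : ⁅x, y⁆ = 1
  · exact commutatorElement_eq_one_iff_mul_comm.mp h1
  · exact absurd (isOfFinOrder_iff_pow_eq_one.mpr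
      ⟨_, Nat.pos_of_ne_zero hcard, htK⟩) (htf _ h1)
end

section
/- The presented group K = ⟨a, s, m ∣ a² = s³ = m³ = (am)² = (sm²)³ = 1⟩ is isomorphic to the amalgamated free product S₃ ∗_{ℤ/3ℤ} D(3,3,3); precisely, K is isomorphic to the pushout (amalgamated product) of the two homomorphisms from the cyclic group of order 3 sending a fixed generator to m in P₁ = ⟨a, m ∣ a² = m³ = (am)² = 1⟩ and to m̄ in P₂ = ⟨s, m̄ ∣ s³ = m̄³ = (s m̄⁻¹)³ = 1⟩. -/
/-- `K = ⟨a, s, m ∣ a² = s³ = m³ = (am)² = (sm²)³ = 1⟩`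
(generators: `0 ↦ a`, `1 ↦ s`, `2 ↦ m`). -/
abbrev Kgrp : Type :=
  PresentedGroup
    ({FreeGroup.of (0 : Fin 3) ^ 2, FreeGroup.of (1 : Fin 3) ^ 3,
      FreeGroup.of (2 : Fin 3) ^ 3,
      (FreeGroup.of (0 : Fin 3) * FreeGroup.of (2 : Fin 3)) ^ 2,
      (FreeGroup.of (1 : Fin 3) * FreeGroup.of (2 : Fin 3) ^ 2) ^ 3} :
        Set (FreeGroup (Fin 3)))

/-- `P₁ = ⟨a, m ∣ a² = m³ = (am)² = 1⟩ ≅ S₃` (generators: `0 ↦ a`, `1 ↦ m`). -/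
abbrev P1 : Type :=
  PresentedGroup
    ({FreeGroup.of (0 : Fin 2) ^ 2, FreeGroup.of (1 : Fin 2) ^ 3,
      (FreeGroup.of (0 : Fin 2) * FreeGroup.of (1 : Fin 2)) ^ 2} :
        Set (FreeGroup (Fin 2)))

/-- `P₂ = ⟨s, m̄ ∣ s³ = m̄³ = (s m̄⁻¹)³ = 1⟩ ≅ D(3,3,3)`
(generators: `0 ↦ s`, `1 ↦ m̄`). -/
abbrev P2 : Type :=
  PresentedGroup
    ({FreeGroup.of (0 : Fin 2) ^ 3, FreeGroup.of (1 : Fin 2) ^ 3,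
      (FreeGroup.of (0 : Fin 2) * (FreeGroup.of (1 : Fin 2))⁻¹) ^ 3} :
        Set (FreeGroup (Fin 2)))

/-- The two vertex groups of the amalgam, indexed by `Bool`. -/
def Fam : Bool → Type
  | true => P1
  | false => P2

instance (b : Bool) : Group (Fam b) := by
  cases b
  · exact inferInstanceAs (Group P2)
  · exact inferInstanceAs (Group P1)

/-- The cyclic group of order 3. -/
abbrev C3 : Type := Multiplicative (ZMod 3)


/- auxiliary -/
theorem pres_rel {α : Type*} {rels : Set (FreeGroup α)} {r : FreeGroup α} (h : r ∈ rels) :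
    PresentedGroup.mk rels r = 1 :=
  (QuotientGroup.eq_one_iff _).mpr (Subgroup.subset_normalClosure h)

def c3Hom {G : Type*} [Group G] (g : G) (h : g ^ 3 = 1) : C3 →* G :=
  AddMonoidHom.toMultiplicativeLeft
    (ZMod.lift 3 ⟨zmultiplesHom (Additive G) (Additive.ofMul g), by
      show Additive.ofMul (g ^ (3:ℤ)) = Additive.ofMul 1
      rw [zpow_ofNat, h]⟩)

theorem c3Hom_apply {G : Type*} [Group G] (g : G) (h : g ^ 3 = 1) :
    c3Hom g h (Multiplicative.ofAdd (1 : ZMod 3)) = g := by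
  have h1 : ((1 : ℤ) : ZMod 3) = 1 := by norm_cast
  unfold c3Hom
  rw [AddMonoidHom.coe_toMultiplicativeLeft]
  dsimp only [Function.comp_apply, toAdd_ofAdd]
  rw [← h1]
  erw [ZMod.lift_coe]
  show g ^ (1:ℤ) = g
  simp

theorem c3_ext {G : Type*} [Group G] {φ ψ : C3 →* G}
    (h : φ (Multiplicative.ofAdd (1 : ZMod 3)) = ψ (Multiplicative.ofAdd (1 : ZMod 3))) :
    φ = ψ := by
  apply MonoidHom.ext; intro x
  have hx : x = (Multiplicative.ofAdd (1 : ZMod 3)) ^ (Multiplicative.toAdd x).val := by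
    rw [← ofAdd_nsmul]
    simp [nsmul_eq_mul, ZMod.natCast_val, ZMod.cast_id, ZMod.natCast_zmod_val]
  rw [hx, map_pow, map_pow, h]

/- elements -/
theorem hm1 : (PresentedGroup.of (1 : Fin 2) : P1) ^ 3 = 1 := by
  have := pres_rel (rels := ({FreeGroup.of (0 : Fin 2) ^ 2, FreeGroup.of (1 : Fin 2) ^ 3,
      (FreeGroup.of (0 : Fin 2) * FreeGroup.of (1 : Fin 2)) ^ 2} : Set (FreeGroup (Fin 2))))
    (r := FreeGroup.of (1 : Fin 2) ^ 3) (by simp)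
  simpa [map_pow, PresentedGroup.of] using this

theorem hm2 : (PresentedGroup.of (1 : Fin 2) : P2) ^ 3 = 1 := by
  have := pres_rel (rels := ({FreeGroup.of (0 : Fin 2) ^ 3, FreeGroup.of (1 : Fin 2) ^ 3,
      (FreeGroup.of (0 : Fin 2) * (FreeGroup.of (1 : Fin 2))⁻¹) ^ 3} : Set (FreeGroup (Fin 2))))
    (r := FreeGroup.of (1 : Fin 2) ^ 3) (by simp)
  simpa [map_pow, PresentedGroup.of] using this

def famHom : ∀ b : Bool, C3 →* Fam b
  | true => c3Hom (PresentedGroup.of (1 : Fin 2) : P1) hm1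
  | false => c3Hom (PresentedGroup.of (1 : Fin 2) : P2) hm2

example : True := trivial

open Monoid PushoutI in
theorem key_s11 : (Monoid.PushoutI.of (φ := famHom) true (PresentedGroup.of (1 : Fin 2) : P1)) =
    (Monoid.PushoutI.of (φ := famHom) false (PresentedGroup.of (1 : Fin 2) : P2)) := by
  have h1 := Monoid.PushoutI.of_apply_eq_base (φ := famHom) true
    (Multiplicative.ofAdd (1 : ZMod 3))
  have h2 := Monoid.PushoutI.of_apply_eq_base (φ := famHom) false
    (Multiplicative.ofAdd (1 : ZMod 3))
  have e1 : famHom true (Multiplicative.ofAdd (1 : ZMod 3)) =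
      (PresentedGroup.of (1 : Fin 2) : P1) := c3Hom_apply _ hm1
  have e2 : famHom false (Multiplicative.ofAdd (1 : ZMod 3)) =
      (PresentedGroup.of (1 : Fin 2) : P2) := c3Hom_apply _ hm2
  rw [e1] at h1; rw [e2] at h2; rw [h1, h2]

/- relations in the vertex groups and in K -/
theorem ha : (PresentedGroup.of (0 : Fin 2) : P1) ^ 2 = 1 := by
  simpa [map_pow, PresentedGroup.of] using (pres_rel (rels := ({FreeGroup.of (0 : Fin 2) ^ 2,
    FreeGroup.of (1 : Fin 2) ^ 3,
    (FreeGroup.of (0 : Fin 2) * FreeGroup.of (1 : Fin 2)) ^ 2} : Set (FreeGroup (Fin 2))))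
    (r := FreeGroup.of (0 : Fin 2) ^ 2) (by simp) :)

theorem ham : ((PresentedGroup.of (0 : Fin 2) : P1) * PresentedGroup.of (1 : Fin 2)) ^ 2 = 1 := by
  simpa [map_pow, map_mul, PresentedGroup.of] using (pres_rel (rels := ({FreeGroup.of (0 : Fin 2) ^ 2,
    FreeGroup.of (1 : Fin 2) ^ 3,
    (FreeGroup.of (0 : Fin 2) * FreeGroup.of (1 : Fin 2)) ^ 2} : Set (FreeGroup (Fin 2))))
    (r := (FreeGroup.of (0 : Fin 2) * FreeGroup.of (1 : Fin 2)) ^ 2) (by simp) :)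

theorem hs : (PresentedGroup.of (0 : Fin 2) : P2) ^ 3 = 1 := by
  simpa [map_pow, PresentedGroup.of] using (pres_rel (rels := ({FreeGroup.of (0 : Fin 2) ^ 3,
    FreeGroup.of (1 : Fin 2) ^ 3,
    (FreeGroup.of (0 : Fin 2) * (FreeGroup.of (1 : Fin 2))⁻¹) ^ 3} : Set (FreeGroup (Fin 2))))
    (r := FreeGroup.of (0 : Fin 2) ^ 3) (by simp) :)

theorem hsm : ((PresentedGroup.of (0 : Fin 2) : P2) *
    (PresentedGroup.of (1 : Fin 2))⁻¹) ^ 3 = 1 := by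
  simpa [map_pow, map_mul, map_inv, PresentedGroup.of] using (pres_rel (rels := ({FreeGroup.of (0 : Fin 2) ^ 3,
    FreeGroup.of (1 : Fin 2) ^ 3,
    (FreeGroup.of (0 : Fin 2) * (FreeGroup.of (1 : Fin 2))⁻¹) ^ 3} : Set (FreeGroup (Fin 2))))
    (r := (FreeGroup.of (0 : Fin 2) * (FreeGroup.of (1 : Fin 2))⁻¹) ^ 3) (by simp) :)

theorem ka : (PresentedGroup.of (0 : Fin 3) : Kgrp) ^ 2 = 1 := by
  simpa [map_pow, PresentedGroup.of] using (pres_rel (rels := ({FreeGroup.of (0 : Fin 3) ^ 2,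
    FreeGroup.of (1 : Fin 3) ^ 3, FreeGroup.of (2 : Fin 3) ^ 3,
    (FreeGroup.of (0 : Fin 3) * FreeGroup.of (2 : Fin 3)) ^ 2,
    (FreeGroup.of (1 : Fin 3) * FreeGroup.of (2 : Fin 3) ^ 2) ^ 3} : Set (FreeGroup (Fin 3))))
    (r := FreeGroup.of (0 : Fin 3) ^ 2) (by simp) :)

theorem ks : (PresentedGroup.of (1 : Fin 3) : Kgrp) ^ 3 = 1 := by
  simpa [map_pow, PresentedGroup.of] using (pres_rel (rels := ({FreeGroup.of (0 : Fin 3) ^ 2,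
    FreeGroup.of (1 : Fin 3) ^ 3, FreeGroup.of (2 : Fin 3) ^ 3,
    (FreeGroup.of (0 : Fin 3) * FreeGroup.of (2 : Fin 3)) ^ 2,
    (FreeGroup.of (1 : Fin 3) * FreeGroup.of (2 : Fin 3) ^ 2) ^ 3} : Set (FreeGroup (Fin 3))))
    (r := FreeGroup.of (1 : Fin 3) ^ 3) (by simp) :)

theorem km : (PresentedGroup.of (2 : Fin 3) : Kgrp) ^ 3 = 1 := by
  simpa [map_pow, PresentedGroup.of] using (pres_rel (rels := ({FreeGroup.of (0 : Fin 3) ^ 2,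
    FreeGroup.of (1 : Fin 3) ^ 3, FreeGroup.of (2 : Fin 3) ^ 3,
    (FreeGroup.of (0 : Fin 3) * FreeGroup.of (2 : Fin 3)) ^ 2,
    (FreeGroup.of (1 : Fin 3) * FreeGroup.of (2 : Fin 3) ^ 2) ^ 3} : Set (FreeGroup (Fin 3))))
    (r := FreeGroup.of (2 : Fin 3) ^ 3) (by simp) :)

theorem kam : ((PresentedGroup.of (0 : Fin 3) : Kgrp) * PresentedGroup.of (2 : Fin 3)) ^ 2 = 1 := by
  simpa [map_pow, map_mul, PresentedGroup.of] using (pres_rel (rels := ({FreeGroup.of (0 : Fin 3) ^ 2,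
    FreeGroup.of (1 : Fin 3) ^ 3, FreeGroup.of (2 : Fin 3) ^ 3,
    (FreeGroup.of (0 : Fin 3) * FreeGroup.of (2 : Fin 3)) ^ 2,
    (FreeGroup.of (1 : Fin 3) * FreeGroup.of (2 : Fin 3) ^ 2) ^ 3} : Set (FreeGroup (Fin 3))))
    (r := (FreeGroup.of (0 : Fin 3) * FreeGroup.of (2 : Fin 3)) ^ 2) (by simp) :)

theorem ksm : ((PresentedGroup.of (1 : Fin 3) : Kgrp) *
    PresentedGroup.of (2 : Fin 3) ^ 2) ^ 3 = 1 := by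
  simpa [map_pow, map_mul, PresentedGroup.of] using (pres_rel (rels := ({FreeGroup.of (0 : Fin 3) ^ 2,
    FreeGroup.of (1 : Fin 3) ^ 3, FreeGroup.of (2 : Fin 3) ^ 3,
    (FreeGroup.of (0 : Fin 3) * FreeGroup.of (2 : Fin 3)) ^ 2,
    (FreeGroup.of (1 : Fin 3) * FreeGroup.of (2 : Fin 3) ^ 2) ^ 3} : Set (FreeGroup (Fin 3))))
    (r := (FreeGroup.of (1 : Fin 3) * FreeGroup.of (2 : Fin 3) ^ 2) ^ 3) (by simp) :)

theorem hsm2 : ((PresentedGroup.of (0 : Fin 2) : P2) *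
    PresentedGroup.of (1 : Fin 2) ^ 2) ^ 3 = 1 := by
  have h2 : (PresentedGroup.of (1 : Fin 2) : P2) ^ 2 = (PresentedGroup.of (1 : Fin 2))⁻¹ :=
    eq_inv_of_mul_eq_one_left (by rw [← pow_succ]; exact hm2)
  rw [h2]; exact hsm

theorem ksm' : ((PresentedGroup.of (1 : Fin 3) : Kgrp) *
    (PresentedGroup.of (2 : Fin 3))⁻¹) ^ 3 = 1 := by
  have h2 : (PresentedGroup.of (2 : Fin 3) : Kgrp) ^ 2 = (PresentedGroup.of (2 : Fin 3))⁻¹ :=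
    eq_inv_of_mul_eq_one_left (by rw [← pow_succ]; exact km)
  rw [← h2]; exact ksm

/- the forward homomorphism -/
def φK : Kgrp →* Monoid.PushoutI famHom :=
  PresentedGroup.toGroup (f := fun i =>
    ![Monoid.PushoutI.of (φ := famHom) true (PresentedGroup.of (0 : Fin 2) : P1),
      Monoid.PushoutI.of (φ := famHom) false (PresentedGroup.of (0 : Fin 2) : P2),
      Monoid.PushoutI.of (φ := famHom) true (PresentedGroup.of (1 : Fin 2) : P1)] i)
    (by
      intro r hr
      simp only [Set.mem_insert_iff, Set.mem_singleton_iff] at hr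
      rcases hr with rfl | rfl | rfl | rfl | rfl <;>
        simp only [map_pow, map_mul, FreeGroup.lift_apply_of, Matrix.cons_val_zero,
          Matrix.cons_val_one, Matrix.head_cons, Matrix.cons_val_two, Matrix.tail_cons]
      · erw [← map_pow, ha, map_one]
      · erw [← map_pow, hs, map_one]
      · erw [← map_pow, hm1, map_one]
      · erw [← map_mul, ← map_pow, ham, map_one]
      · erw [key_s11, ← map_pow, ← map_mul, ← map_pow, hsm2, map_one])

/- the two legs of the backward homomorphism -/
def g1 : P1 →* Kgrp :=
  PresentedGroup.toGroup (f := fun i =>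
    ![(PresentedGroup.of (0 : Fin 3) : Kgrp), PresentedGroup.of (2 : Fin 3)] i)
    (by
      intro r hr
      simp only [Set.mem_insert_iff, Set.mem_singleton_iff] at hr
      rcases hr with rfl | rfl | rfl <;>
        simp only [map_pow, map_mul, FreeGroup.lift_apply_of, Matrix.cons_val_zero,
          Matrix.cons_val_one, Matrix.head_cons]
      · exact ka
      · exact km
      · exact kam)

def g2 : P2 →* Kgrp :=
  PresentedGroup.toGroup (f := fun i =>
    ![(PresentedGroup.of (1 : Fin 3) : Kgrp), PresentedGroup.of (2 : Fin 3)] i)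
    (by
      intro r hr
      simp only [Set.mem_insert_iff, Set.mem_singleton_iff] at hr
      rcases hr with rfl | rfl | rfl <;>
        simp only [map_pow, map_mul, map_inv, FreeGroup.lift_apply_of, Matrix.cons_val_zero,
          Matrix.cons_val_one, Matrix.head_cons]
      · exact ks
      · exact km
      · exact ksm')

def gFam : ∀ b : Bool, Fam b →* Kgrp
  | true => g1
  | false => g2

def kK : C3 →* Kgrp := c3Hom (PresentedGroup.of (2 : Fin 3)) km

theorem hcomm : ∀ b : Bool, (gFam b).comp (famHom b) = kK := by
  intro b
  cases b <;> apply c3_ext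
  · show g2 (famHom false (Multiplicative.ofAdd (1 : ZMod 3))) = _
    rw [show famHom false (Multiplicative.ofAdd (1 : ZMod 3)) =
        (PresentedGroup.of (1 : Fin 2) : P2) from c3Hom_apply _ hm2]
    rw [show kK (Multiplicative.ofAdd (1 : ZMod 3)) =
        (PresentedGroup.of (2 : Fin 3) : Kgrp) from c3Hom_apply _ km]
    simp [g2]
  · show g1 (famHom true (Multiplicative.ofAdd (1 : ZMod 3))) = _
    rw [show famHom true (Multiplicative.ofAdd (1 : ZMod 3)) =
        (PresentedGroup.of (1 : Fin 2) : P1) from c3Hom_apply _ hm1]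
    rw [show kK (Multiplicative.ofAdd (1 : ZMod 3)) =
        (PresentedGroup.of (2 : Fin 3) : Kgrp) from c3Hom_apply _ km]
    simp [g1]

def ψK : Monoid.PushoutI famHom →* Kgrp := Monoid.PushoutI.lift gFam kK hcomm

theorem lift_of' (b : Bool) (x : Fam b) :
    ψK (Monoid.PushoutI.of (φ := famHom) b x) = gFam b x := by
  rw [ψK, Monoid.PushoutI.lift_of]

theorem phiK_of (x : Fin 3) : φK (PresentedGroup.of x) =
    ![Monoid.PushoutI.of (φ := famHom) true (PresentedGroup.of (0 : Fin 2) : P1),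
      Monoid.PushoutI.of (φ := famHom) false (PresentedGroup.of (0 : Fin 2) : P2),
      Monoid.PushoutI.of (φ := famHom) true (PresentedGroup.of (1 : Fin 2) : P1)] x := by
  rw [φK, PresentedGroup.toGroup.of]

theorem g1_of (x : Fin 2) : g1 (PresentedGroup.of x) =
    ![(PresentedGroup.of (0 : Fin 3) : Kgrp), PresentedGroup.of (2 : Fin 3)] x := by
  rw [g1, PresentedGroup.toGroup.of]

theorem g2_of (x : Fin 2) : g2 (PresentedGroup.of x) =
    ![(PresentedGroup.of (1 : Fin 3) : Kgrp), PresentedGroup.of (2 : Fin 3)] x := by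
  rw [g2, PresentedGroup.toGroup.of]

theorem comp1 : ψK.comp φK = MonoidHom.id Kgrp := by
  apply PresentedGroup.ext
  intro x
  show ψK (φK (PresentedGroup.of x)) = PresentedGroup.of x
  match x with
  | 0 =>
    rw [phiK_of]
    show ψK (Monoid.PushoutI.of (φ := famHom) true (PresentedGroup.of (0 : Fin 2))) = _
    erw [lift_of']
    show g1 (PresentedGroup.of (0 : Fin 2)) = _
    rw [g1_of]; rfl
  | 1 =>
    rw [phiK_of]
    show ψK (Monoid.PushoutI.of (φ := famHom) false (PresentedGroup.of (0 : Fin 2))) = _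
    erw [lift_of']
    show g2 (PresentedGroup.of (0 : Fin 2)) = _
    rw [g2_of]; rfl
  | 2 =>
    rw [phiK_of]
    show ψK (Monoid.PushoutI.of (φ := famHom) true (PresentedGroup.of (1 : Fin 2))) = _
    erw [lift_of']
    show g1 (PresentedGroup.of (1 : Fin 2)) = _
    rw [g1_of]; rfl

theorem comp2 : φK.comp ψK = MonoidHom.id (Monoid.PushoutI famHom) := by
  apply Monoid.PushoutI.hom_ext_nonempty
  intro b
  cases b
  · apply PresentedGroup.ext
    intro x
    show φK (ψK (Monoid.PushoutI.of (φ := famHom) false (PresentedGroup.of x))) =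
      Monoid.PushoutI.of (φ := famHom) false (PresentedGroup.of x)
    erw [lift_of']
    show φK (g2 (PresentedGroup.of x)) = _
    match x with
    | 0 =>
      rw [g2_of]
      show φK (PresentedGroup.of (1 : Fin 3)) = _
      rw [phiK_of]
      rfl
    | 1 =>
      rw [g2_of]
      show φK (PresentedGroup.of (2 : Fin 3)) = _
      rw [phiK_of]
      exact key_s11
  · apply PresentedGroup.ext
    intro x
    show φK (ψK (Monoid.PushoutI.of (φ := famHom) true (PresentedGroup.of x))) =
      Monoid.PushoutI.of (φ := famHom) true (PresentedGroup.of x)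
    erw [lift_of']
    show φK (g1 (PresentedGroup.of x)) = _
    match x with
    | 0 =>
      rw [g1_of]
      show φK (PresentedGroup.of (0 : Fin 3)) = _
      rw [phiK_of]
      rfl
    | 1 =>
      rw [g1_of]
      show φK (PresentedGroup.of (2 : Fin 3)) = _
      rw [phiK_of]
      rfl


/-- `K ≅ S₃ ∗_{ℤ/3ℤ} D(3,3,3)`: `K` is isomorphic to the pushout
(amalgamated free product) of the two homomorphisms from the cyclic group of
order 3 sending a fixed generator to `m ∈ P₁` and to `m̄ ∈ P₂`. -/
theorem Kgrp_iso_amalgam :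
    ∃ f : ∀ b : Bool, C3 →* Fam b,
      (f true (Multiplicative.ofAdd (1 : ZMod 3)) =
        (PresentedGroup.of (1 : Fin 2) : P1)) ∧
      (f false (Multiplicative.ofAdd (1 : ZMod 3)) =
        (PresentedGroup.of (1 : Fin 2) : P2)) ∧
      Nonempty (Kgrp ≃* Monoid.PushoutI f) := by
  exact ⟨famHom, c3Hom_apply _ hm1, c3Hom_apply _ hm2,
    ⟨MonoidHom.toMulEquiv φK ψK comp1 comp2⟩⟩
end
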